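/- arXiv:0708.3871 — 4 statements merged into one kernel-verified Lean document; each statement's English description precedes it below -/
import Mathlib

section
/- Suppose X : [−1,1] → G is a continuous function such that X([−1,1]) ⊆ U₄ and for all r,s ∈ [−1,1] with r+s ∈ [−1,1], one has (X(r),X(s)) ∈ Ω and X(r+s) = X(r)·X(s). Then there exist ε > 0 and a local one-parameter subgroup X̄ : (−1−ε,1+ε) → G of G such that X̄ restricted to [−1,1] equals X. -/
open scoped Topology Manifold ENNReal

/-- A local group in the sense of Goldbring's "Hilbert's Fifth Problem for Local Groups":
a Hausdorff-intended topological space `G` with a distinguished element `one`, a partial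
inversion `inv` defined (i.e. meaningful) on the open set `Lambda`, and a partial product
`mul` meaningful on the open set `Omega`. -/
structure LocalGroup (G : Type*) [TopologicalSpace G] where
  one : G
  Lambda : Set G
  Omega : Set (G × G)
  inv : G → G
  mul : G → G → G
  isOpen_Lambda : IsOpen Lambda
  isOpen_Omega : IsOpen Omega
  one_mem_Lambda : one ∈ Lambda
  pair_one_left : ∀ x : G, (one, x) ∈ Omega
  pair_one_right : ∀ x : G, (x, one) ∈ Omega
  continuousOn_inv : ContinuousOn inv Lambda
  continuousOn_mul : ContinuousOn (fun q : G × G => mul q.1 q.2) Omega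
  one_mul : ∀ x : G, mul one x = x
  mul_one : ∀ x : G, mul x one = x
  mem_inv_right : ∀ x ∈ Lambda, (x, inv x) ∈ Omega
  mem_inv_left : ∀ x ∈ Lambda, (inv x, x) ∈ Omega
  mul_inv_self : ∀ x ∈ Lambda, mul x (inv x) = one
  inv_mul_self : ∀ x ∈ Lambda, mul (inv x) x = one
  assoc : ∀ x y z : G, (x, y) ∈ Omega → (y, z) ∈ Omega → (mul x y, z) ∈ Omega →
    (x, mul y z) ∈ Omega → mul (mul x y) z = mul x (mul y z)

namespace LocalGroup

variable {G : Type*} {G' : Type*} [TopologicalSpace G] [TopologicalSpace G']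

/-- The standing conventions of the paper: `Λ = G`, and whenever `(g,h) ∈ Ω` also
`(h⁻¹, g⁻¹) ∈ Ω` with `(gh)⁻¹ = h⁻¹g⁻¹`. -/
def Std (L : LocalGroup G) : Prop :=
  L.Lambda = Set.univ ∧
    ∀ g h : G, (g, h) ∈ L.Omega →
      (L.inv h, L.inv g) ∈ L.Omega ∧ L.inv (L.mul g h) = L.mul (L.inv h) (L.inv g)

/-- A symmetric subset: contained in the domain of inversion and stable under it. -/
def IsSymmetric (L : LocalGroup G) (S : Set G) : Prop :=
  S ⊆ L.Lambda ∧ L.inv '' S = S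

/-- A subgroup of a local group. -/
def IsSubgroup (L : LocalGroup G) (H : Set G) : Prop :=
  L.one ∈ H ∧ H ⊆ L.Lambda ∧ (∀ x ∈ H, ∀ y ∈ H, (x, y) ∈ L.Omega) ∧
    (∀ x ∈ H, L.inv x ∈ H) ∧ ∀ x ∈ H, ∀ y ∈ H, L.mul x y ∈ H

/-- No small subgroups. -/
def NSS (L : LocalGroup G) : Prop :=
  ∃ U ∈ 𝓝 L.one, ∀ H : Set G, L.IsSubgroup H → H ⊆ U → H = {L.one}

/-- No small connected subgroups. -/
def NSCS (L : LocalGroup G) : Prop :=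
  ∃ U ∈ 𝓝 L.one, ∀ H : Set G, L.IsSubgroup H → IsConnected H → H ⊆ U → H = {L.one}

/-- `(a₁, …, aₙ)` represents `b`: all ways of multiplying the list are defined and equal `b`.
By convention the empty list represents `one`. -/
def Represents (L : LocalGroup G) : List G → G → Prop
  | [], b => b = L.one
  | [a], b => b = a
  | a :: c :: l, b =>
      ∀ i : ℕ, 1 ≤ i → i < (a :: c :: l).length →
        ∃ b₁ b₂ : G, L.Represents ((a :: c :: l).take i) b₁ ∧
          L.Represents ((a :: c :: l).drop i) b₂ ∧ (b₁, b₂) ∈ L.Omega ∧ L.mul b₁ b₂ = b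
termination_by l => l.length
decreasing_by
  all_goals simp only [List.length_cons, List.length_take, List.length_drop] at *
  all_goals omega

/-- `A^n`: all products of `n` elements of `A` (only meaningful when such products are defined). -/
def setPow (L : LocalGroup G) (A : Set G) (n : ℕ) : Set G :=
  {b | ∃ l : List G, l.length = n ∧ (∀ a ∈ l, a ∈ A) ∧ L.Represents l b}

/-- A chain `U₁ ⊇ U₂ ⊇ ⋯` of symmetric open neighborhoods of `1` such that products of `n`
elements of `Uₙ` are defined (the sets `𝒰ₙ` of the paper). -/
def IsProdChain (L : LocalGroup G) (U : ℕ → Set G) : Prop :=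
  ∀ n : ℕ, 1 ≤ n →
    IsOpen (U n) ∧ L.one ∈ U n ∧ L.IsSymmetric (U n) ∧ U (n + 1) ⊆ U n ∧
      ∀ l : List G, l.length = n → (∀ a ∈ l, a ∈ U n) → ∃ b, L.Represents l b

/-- `a^k` is defined and equal to `b`, for `k : ℤ` (with `a^(-n) := (a⁻¹)^n`). -/
def zpowRep (L : LocalGroup G) (a : G) : ℤ → G → Prop
  | Int.ofNat n, b => L.Represents (List.replicate n a) b
  | Int.negSucc n, b => L.Represents (List.replicate (n + 1) (L.inv a)) b

/-- A special neighborhood (relative to a product chain `U`): a compact symmetric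
neighborhood of `1` contained in `U 2`, containing no nontrivial subgroup, on which
squaring is injective. -/
def IsSpecialNbhd (L : LocalGroup G) (U : ℕ → Set G) (SU : Set G) : Prop :=
  IsCompact SU ∧ SU ∈ 𝓝 L.one ∧ L.IsSymmetric SU ∧ SU ⊆ U 2 ∧
    (∀ H : Set G, L.IsSubgroup H → H ⊆ SU → H = {L.one}) ∧
    ∀ x ∈ SU, ∀ y ∈ SU, L.mul x x = L.mul y y → x = y

/-- `Λ_U` for the restriction `G|U`. -/
def restLambda (L : LocalGroup G) (U : Set G) : Set G := L.Lambda ∩ U ∩ L.inv ⁻¹' U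

/-- `Ω_U` for the restriction `G|U`. -/
def restOmega (L : LocalGroup G) (U : Set G) : Set (G × G) :=
  {q | q ∈ L.Omega ∧ q.1 ∈ U ∧ q.2 ∈ U ∧ L.mul q.1 q.2 ∈ U}

/-- A morphism of local groups `L → L'`. -/
def IsMorphism (L : LocalGroup G) (L' : LocalGroup G') (f : G → G') : Prop :=
  Continuous f ∧ f L.one = L'.one ∧
    (∀ x ∈ L.Lambda, f x ∈ L'.Lambda ∧ f (L.inv x) = L'.inv (f x)) ∧
    ∀ x y : G, (x, y) ∈ L.Omega → ((f x, f y) ∈ L'.Omega ∧ f (L.mul x y) = L'.mul (f x) (f y))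

/-- `f` is a morphism of local groups `G|U → G'|U'` between restrictions. -/
def IsRestMorphism (L : LocalGroup G) (L' : LocalGroup G') (U : Set G) (U' : Set G')
    (f : G → G') : Prop :=
  ContinuousOn f U ∧ Set.MapsTo f U U' ∧ f L.one = L'.one ∧
    (∀ x ∈ L.restLambda U, f x ∈ L'.restLambda U' ∧ f (L.inv x) = L'.inv (f x)) ∧
    ∀ x y : G, (x, y) ∈ L.restOmega U →
      ((f x, f y) ∈ L'.restOmega U' ∧ f (L.mul x y) = L'.mul (f x) (f y))

/-- Local isomorphism: a homeomorphism between open neighborhoods of the identities which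
is a morphism of restrictions in both directions. -/
def LocallyIsomorphic (L : LocalGroup G) (L' : LocalGroup G') : Prop :=
  ∃ (U : Set G) (U' : Set G') (f : G → G') (g : G' → G),
    IsOpen U ∧ L.one ∈ U ∧ IsOpen U' ∧ L'.one ∈ U' ∧
      Set.BijOn f U U' ∧ (∀ x ∈ U, g (f x) = x) ∧ (∀ y ∈ U', f (g y) = y) ∧
      L.IsRestMorphism L' U U' f ∧ L'.IsRestMorphism L U' U g

/-- A topological group regarded as a local group with `Λ = G` and `Ω = G × G`. -/
def ofGroup (H : Type*) [TopologicalSpace H] [Group H] [IsTopologicalGroup H] : LocalGroup H where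
  one := 1
  Lambda := Set.univ
  Omega := Set.univ
  inv := fun x => x⁻¹
  mul := fun x y => x * y
  isOpen_Lambda := isOpen_univ
  isOpen_Omega := isOpen_univ
  one_mem_Lambda := trivial
  pair_one_left := fun _ => trivial
  pair_one_right := fun _ => trivial
  continuousOn_inv := continuous_inv.continuousOn
  continuousOn_mul := (continuous_fst.mul continuous_snd).continuousOn
  one_mul := fun x => _root_.one_mul x
  mul_one := fun x => _root_.mul_one x
  mem_inv_right := fun _ _ => trivial
  mem_inv_left := fun _ _ => trivial
  mul_inv_self := fun x _ => mul_inv_cancel x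
  inv_mul_self := fun x _ => inv_mul_cancel x
  assoc := fun x y z _ _ _ _ => mul_assoc x y z

/-- A bundled (finite-dimensional, real) Lie group in the Mathlib sense. -/
structure BundledLieGroup : Type 1 where
  n : ℕ
  carrier : Type
  [ts : TopologicalSpace carrier]
  [t2 : T2Space carrier]
  [grp : Group carrier]
  [tg : IsTopologicalGroup carrier]
  [cs : ChartedSpace (EuclideanSpace ℝ (Fin n)) carrier]
  [lie : LieGroup (𝓡 n) (⊤ : ℕ∞) carrier]

/-- `L` is locally isomorphic to (the local group underlying) a Lie group. -/
def IsLieLocallyIsomorphic (L : LocalGroup G) : Prop :=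
  ∃ B : BundledLieGroup,
    letI := B.ts; letI := B.grp; letI := B.tg
    L.LocallyIsomorphic (ofGroup B.carrier)

/-- A local one-parameter subgroup of `L`, with domain `(-r, r)` (where `r ∈ (0,∞]`). -/
structure LocalOnePS (L : LocalGroup G) where
  r : ℝ≥0∞
  r_pos : 0 < r
  toFun : ℝ → G
  mem_Lambda : ∀ t : ℝ, ENNReal.ofReal |t| < r → toFun t ∈ L.Lambda
  continuousOn : ContinuousOn toFun {t : ℝ | ENNReal.ofReal |t| < r}
  add : ∀ s t : ℝ, ENNReal.ofReal |s| < r → ENNReal.ofReal |t| < r →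
    ENNReal.ofReal |s + t| < r →
      (toFun s, toFun t) ∈ L.Omega ∧ toFun (s + t) = L.mul (toFun s) (toFun t)

variable {L : LocalGroup G}

/-- Equivalence (equality of germs at 0) of local one-parameter subgroups. -/
def OnePSEquiv (X Y : LocalOnePS L) : Prop :=
  ∃ s : ℝ, 0 < s ∧ ENNReal.ofReal s < X.r ∧ ENNReal.ofReal s < Y.r ∧
    ∀ t : ℝ, |t| < s → X.toFun t = Y.toFun t

theorem onePS_exists_small (X : LocalOnePS L) : ∃ s : ℝ, 0 < s ∧ ENNReal.ofReal s < X.r := by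
  rcases eq_or_ne X.r ⊤ with h | h
  · exact ⟨1, one_pos, by simp [h]⟩
  · have h0 : X.r ≠ 0 := ne_of_gt X.r_pos
    have htr : 0 < X.r.toReal := ENNReal.toReal_pos h0 h
    refine ⟨X.r.toReal / 2, by linarith, ?_⟩
    rw [ENNReal.ofReal_lt_iff_lt_toReal (by linarith) h]
    linarith

instance onePSSetoid (L : LocalGroup G) : Setoid (LocalOnePS L) where
  r := OnePSEquiv
  iseqv := by
    constructor
    · intro X
      obtain ⟨s, hs, hsr⟩ := onePS_exists_small X
      exact ⟨s, hs, hsr, hsr, fun _ _ => rfl⟩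
    · rintro X Y ⟨s, hs, h1, h2, h3⟩
      exact ⟨s, hs, h2, h1, fun t ht => (h3 t ht).symm⟩
    · rintro X Y Z ⟨s1, hs1, hX1, hY1, hag1⟩ ⟨s2, hs2, hY2, hZ2, hag2⟩
      refine ⟨min s1 s2, lt_min hs1 hs2, ?_, ?_, fun t ht => ?_⟩
      · exact lt_of_le_of_lt (ENNReal.ofReal_le_ofReal (min_le_left _ _)) hX1
      · exact lt_of_le_of_lt (ENNReal.ofReal_le_ofReal (min_le_right _ _)) hZ2
      · rw [hag1 t (lt_of_lt_of_le ht (min_le_left _ _)),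
          hag2 t (lt_of_lt_of_le ht (min_le_right _ _))]

/-- `L(G)`: the set of germs at `0` of local one-parameter subgroups of `L`. -/
abbrev LGQuot (L : LocalGroup G) := Quotient (onePSSetoid L)

/-- The trivial local one-parameter subgroup `O`. -/
noncomputable def constOnePS (L : LocalGroup G) : LocalOnePS L where
  r := ⊤
  r_pos := by simp
  toFun := fun _ => L.one
  mem_Lambda := fun _ _ => L.one_mem_Lambda
  continuousOn := continuousOn_const
  add := fun s t _ _ _ => ⟨L.pair_one_left L.one, (L.one_mul L.one).symm⟩

/-- The domain of a germ of local one-parameter subgroups: the union of the domains of its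
representatives. -/
def germDomain (L : LocalGroup G) (X : LGQuot L) : Set ℝ :=
  {t | ∃ Y : LocalOnePS L, ⟦Y⟧ = X ∧ ENNReal.ofReal |t| < Y.r}

/-- Evaluation of a germ at a point of its domain (junk value outside). This is
well defined, i.e. independent of the choice of representative, by the basic theory
of local one-parameter subgroups. -/
noncomputable def germEval (L : LocalGroup G) (X : LGQuot L) (t : ℝ) : G := by
  classical exact if h : ∃ Y : LocalOnePS L, ⟦Y⟧ = X ∧ ENNReal.ofReal |t| < Y.r then h.choose.toFun t
  else L.one

/-- The topology on `L(G)` generated by the subbasic sets `B_{C,U}` for `C ⊆ (-2,2)`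
compact and `U ⊆ G` open. -/
instance germTopology (L : LocalGroup G) : TopologicalSpace (LGQuot L) :=
  TopologicalSpace.generateFrom
    {S | ∃ (C : Set ℝ) (U : Set G), IsCompact C ∧ C ⊆ Set.Ioo (-2 : ℝ) 2 ∧ IsOpen U ∧
      S = {X : LGQuot L | C ⊆ germDomain L X ∧ ∀ t ∈ C, germEval L X t ∈ U}}

/-- A sublocal group `H` of `L`, with associated neighborhood `V`. -/
def IsSublocalGroup (L : LocalGroup G) (H V : Set G) : Prop :=
  L.one ∈ H ∧ IsOpen V ∧ L.one ∈ V ∧ H ⊆ V ∧ (∀ x ∈ closure H, x ∈ V → x ∈ H) ∧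
    (∀ x ∈ H, x ∈ L.Lambda → L.inv x ∈ V → L.inv x ∈ H) ∧
    ∀ x ∈ H, ∀ y ∈ H, (x, y) ∈ L.Omega → L.mul x y ∈ V → L.mul x y ∈ H

/-- A normal sublocal group `H` of `L`, with normalizing neighborhood `V`. -/
def IsNormalSublocalGroup (L : LocalGroup G) (H V : Set G) : Prop :=
  L.IsSublocalGroup H V ∧ L.IsSymmetric V ∧
    ∀ y ∈ V, ∀ x ∈ H, ∀ b : G, L.Represents [y, x, L.inv y] b → b ∈ V → b ∈ H

/-- The coset relation `E_H` on `W`. -/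
def quotRel (L : LocalGroup G) (H W : Set G) : ↥W → ↥W → Prop :=
  fun x y => L.mul (L.inv ↑x) ↑y ∈ H

/-- The local coset space `W/E_H`, with the quotient topology. -/
abbrev QuotCarrier (L : LocalGroup G) (H W : Set G) := Quot (L.quotRel H W)

/-- `Q` is the local quotient group structure `(G/H)_W` on `W/E_H`. -/
def IsQuotStructure (L : LocalGroup G) (H W : Set G) (h1W : L.one ∈ W)
    (Q : LocalGroup (L.QuotCarrier H W)) : Prop :=
  Q.one = Quot.mk (L.quotRel H W) ⟨L.one, h1W⟩ ∧
    Q.Lambda = Set.univ ∧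
    (∀ (x : ↥W) (hx : L.inv ↑x ∈ W),
      Q.inv (Quot.mk (L.quotRel H W) x) = Quot.mk (L.quotRel H W) ⟨L.inv ↑x, hx⟩) ∧
    Q.Omega = {q | ∃ x y : ↥W, ((x : G), (y : G)) ∈ L.Omega ∧ L.mul ↑x ↑y ∈ W ∧
      q = (Quot.mk (L.quotRel H W) x, Quot.mk (L.quotRel H W) y)} ∧
    ∀ (x y : ↥W) (_ : ((x : G), (y : G)) ∈ L.Omega) (hm : L.mul ↑x ↑y ∈ W),
      Q.mul (Quot.mk (L.quotRel H W) x) (Quot.mk (L.quotRel H W) y) =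
        Quot.mk (L.quotRel H W) ⟨L.mul ↑x ↑y, hm⟩

/-- The sup-norm of a real-valued function. -/
noncomputable def supNorm (f : G → ℝ) : ℝ := ⨆ x : G, |f x|

/-- `W²` = the set of products of two elements of `W`. -/
def sqSet (L : LocalGroup G) (W : Set G) : Set G :=
  {z | ∃ a ∈ W, ∃ b ∈ W, (a, b) ∈ L.Omega ∧ L.mul a b = z}

/-- The (left-translation) action `a · f` of `a` on functions supported in `W`:
`(a·f)(x) = f (a⁻¹ x)` for `x ∈ W²` and `0` otherwise. -/
noncomputable def act (L : LocalGroup G) (W : Set G) (a : G) (f : G → ℝ) : G → ℝ := by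
  classical exact fun x => if x ∈ L.sqSet W then f (L.mul (L.inv a) x) else 0

/-- `ord(x) ≥ n` relative to the special neighborhood `SU`: all powers `x^k`, `|k| ≤ n`,
are defined and lie in `SU`. -/
def ordGE (L : LocalGroup G) (SU : Set G) (n : ℕ) : Set G :=
  {x | ∀ k : ℤ, k.natAbs ≤ n → ∃ b : G, L.zpowRep x k b ∧ b ∈ SU}

end LocalGroup

open LocalGroup


namespace LocalGroup

variable {G : Type*} [TopologicalSpace G] {L : LocalGroup G}

lemma rep_one' {a b : G} (h : L.Represents [a] b) : b = a := by
  simpa [Represents] using h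

lemma rep_two' {a b c : G} (h : L.Represents [a, b] c) :
    (a, b) ∈ L.Omega ∧ L.mul a b = c := by
  rw [Represents] at h
  obtain ⟨b₁, b₂, h1, h2, hΩ, hm⟩ := h 1 le_rfl (by simp)
  simp only [List.take, List.drop] at h1 h2
  rw [rep_one' h1, rep_one' h2] at hΩ hm
  exact ⟨hΩ, hm⟩

lemma rep_three' {a b c d : G} (h : L.Represents [a, b, c] d) :
    d = L.mul (L.mul a b) c := by
  rw [Represents] at h
  obtain ⟨c₁, c₂, h3, h4, hΩ2, hm2⟩ := h 2 (by norm_num) (by simp)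
  simp only [List.take, List.drop] at h3 h4
  obtain ⟨_, e3⟩ := rep_two' h3
  rw [rep_one' h4, ← e3] at hm2
  exact hm2.symm

lemma rep_four' {a b c d e : G} (h : L.Represents [a, b, c, d] e) :
    (L.mul a b, L.mul c d) ∈ L.Omega ∧ e = L.mul (L.mul a b) (L.mul c d) ∧
    e = L.mul a (L.mul (L.mul b c) d) := by
  rw [Represents] at h
  obtain ⟨b₁, b₂, h1, h2, hΩ1, hm1⟩ := h 1 le_rfl (by simp)
  obtain ⟨c₁, c₂, h3, h4, hΩ2, hm2⟩ := h 2 (by norm_num) (by simp)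
  simp only [List.take, List.drop] at h1 h2 h3 h4
  obtain ⟨_, e3⟩ := rep_two' h3
  obtain ⟨_, e4⟩ := rep_two' h4
  rw [← e3, ← e4] at hΩ2 hm2
  rw [rep_one' h1, rep_three' h2] at hm1
  exact ⟨hΩ2, hm2.symm, hm1.symm⟩

end LocalGroup

/-- extension of a one-parameter "segment" `X : [-1,1] → G` to a local
one-parameter subgroup on `(-1-ε, 1+ε)`. -/
theorem statement_9 {G : Type*} [TopologicalSpace G] [T2Space G]
    (L : LocalGroup G) (hstd : L.Std) (Un : ℕ → Set G) (hUn : L.IsProdChain Un)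
    (X : ℝ → G) (hcont : ContinuousOn X (Set.Icc (-1 : ℝ) 1))
    (himg : ∀ t ∈ Set.Icc (-1 : ℝ) 1, X t ∈ Un 4)
    (hadd : ∀ r s : ℝ, r ∈ Set.Icc (-1 : ℝ) 1 → s ∈ Set.Icc (-1 : ℝ) 1 →
      r + s ∈ Set.Icc (-1 : ℝ) 1 →
      (X r, X s) ∈ L.Omega ∧ X (r + s) = L.mul (X r) (X s)) :
    ∃ ε : ℝ, 0 < ε ∧ ∃ Y : LocalOnePS L, Y.r = ENNReal.ofReal (1 + ε) ∧
      ∀ t ∈ Set.Icc (-1 : ℝ) 1, Y.toFun t = X t := by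
  obtain ⟨hΛ, -⟩ := hstd
  have h43 : Un 4 ⊆ Un 3 := (hUn 3 (by norm_num)).2.2.2.1
  have h32 : Un 3 ⊆ Un 2 := (hUn 2 (by norm_num)).2.2.2.1
  have hex2 := (hUn 2 (by norm_num)).2.2.2.2
  have hex4 := (hUn 4 (by norm_num)).2.2.2.2
  have hmemI : ∀ t : ℝ, |t| < 2 → (t / 2) ∈ Set.Icc (-1 : ℝ) 1 := by
    intro t ht
    rw [abs_lt] at ht
    constructor <;> [linarith [ht.1]; linarith [ht.2]]
  have hU4 : ∀ t : ℝ, |t| < 2 → X (t / 2) ∈ Un 4 := fun t ht => himg _ (hmemI t ht)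
  have hsq : ∀ t : ℝ, |t| < 2 → (X (t / 2), X (t / 2)) ∈ L.Omega := by
    intro t ht
    obtain ⟨b, hb⟩ := hex2 [X (t / 2), X (t / 2)] rfl (by
      intro a ha
      simp only [List.mem_cons, List.not_mem_nil, or_false] at ha
      rcases ha with h | h <;> (subst h; exact h32 (h43 (hU4 t ht))))
    exact (rep_two' hb).1
  have key : ∀ s t : ℝ, |s| < 2 → |t| < 2 → |s + t| < 2 →
      (L.mul (X (s / 2)) (X (s / 2)), L.mul (X (t / 2)) (X (t / 2))) ∈ L.Omega ∧
      L.mul (X ((s + t) / 2)) (X ((s + t) / 2)) =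
        L.mul (L.mul (X (s / 2)) (X (s / 2))) (L.mul (X (t / 2)) (X (t / 2))) := by
    intro s t hs ht hst
    set a := X (s / 2) with ha_def
    set b := X (t / 2) with hb_def
    have hsI := hmemI s hs
    have htI := hmemI t ht
    have hstI := hmemI (s + t) hst
    have hsum : s / 2 + t / 2 ∈ Set.Icc (-1 : ℝ) 1 := by
      rwa [show s / 2 + t / 2 = (s + t) / 2 by ring]
    have hab := hadd (s / 2) (t / 2) hsI htI hsum
    have hba := hadd (t / 2) (s / 2) htI hsI (by rwa [add_comm])
    have hu : X ((s + t) / 2) = L.mul a b := by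
      rw [show (s + t) / 2 = s / 2 + t / 2 by ring]
      exact hab.2
    have hcomm : L.mul b a = L.mul a b := by
      rw [← hab.2, ← hba.2, add_comm]
    have ha4 := hU4 s hs
    have hb4 := hU4 t ht
    obtain ⟨c, hc⟩ := hex4 [a, a, b, b] rfl (by
      intro x hx
      simp only [List.mem_cons, List.not_mem_nil, or_false] at hx
      rcases hx with h | h | h | h <;> subst h <;> assumption)
    obtain ⟨e, he⟩ := hex4 [a, b, a, b] rfl (by
      intro x hx
      simp only [List.mem_cons, List.not_mem_nil, or_false] at hx
      rcases hx with h | h | h | h <;> subst h <;> assumption)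
    obtain ⟨hΩc, hc1, hc2⟩ := rep_four' hc
    obtain ⟨hΩe, he1, he2⟩ := rep_four' he
    have hce : c = e := by rw [hc2, he2, hcomm]
    refine ⟨hΩc, ?_⟩
    rw [hu, ← he1, ← hce]
    exact hc1
  have hiff : ∀ t : ℝ, ENNReal.ofReal |t| < ENNReal.ofReal 2 ↔ |t| < 2 := by
    intro t
    exact ENNReal.ofReal_lt_ofReal_iff (by norm_num)
  refine ⟨1, one_pos, ⟨ENNReal.ofReal 2, by norm_num,
    fun t => L.mul (X (t / 2)) (X (t / 2)), ?_, ?_, ?_⟩, by norm_num, ?_⟩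
  · intro t _
    rw [hΛ]
    trivial
  · have hhalf : ContinuousOn (fun t : ℝ => X (t / 2))
        {t : ℝ | ENNReal.ofReal |t| < ENNReal.ofReal 2} := by
      refine hcont.comp ((continuous_id.div_const 2).continuousOn) ?_
      intro t ht
      exact hmemI t ((hiff t).1 ht)
    refine L.continuousOn_mul.comp (hhalf.prodMk hhalf) ?_
    intro t ht
    exact hsq t ((hiff t).1 ht)
  · intro s t hs ht hst
    have := key s t ((hiff s).1 hs) ((hiff t).1 ht) ((hiff (s + t)).1 hst)
    exact ⟨this.1, this.2⟩
  · intro t ht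
    have htI : t / 2 ∈ Set.Icc (-1 : ℝ) 1 := by
      obtain ⟨h1, h2⟩ := ht
      constructor <;> [linarith; linarith]
    have := (hadd (t / 2) (t / 2) htI htI (by rwa [show t / 2 + t / 2 = t by ring])).2
    rw [show t / 2 + t / 2 = t by ring] at this
    exact this.symm
end

section
/- Let H be a topological group and X : ℝ → H a one-parameter subgroup (a continuous group homomorphism from the additive group ℝ to H). (1) If H₁ is a closed subgroup of H, then either X(ℝ) ⊆ H₁ or there is a neighborhood D of 0 in ℝ such that X(D) ∩ H₁ = {1}. (2) If X is nontrivial (not constantly 1), then there is a neighborhood D of 0 in ℝ on which X is injective. -/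
open scoped Topology Manifold ENNReal

open LocalGroup

theorem closed_subgroup_real (S : AddSubgroup ℝ) (hS : IsClosed (S : Set ℝ)) :
    S = ⊤ ∨ ∃ ε : ℝ, 0 < ε ∧ ∀ x ∈ S, |x| < ε → x = 0 := by
  rcases S.dense_or_cyclic with h | ⟨a, ha⟩
  · left
    have : (S : Set ℝ) = Set.univ := by rw [← hS.closure_eq]; exact h.closure_eq
    exact SetLike.ext' this
  · rcases eq_or_ne a 0 with rfl | h0
    · right
      refine ⟨1, one_pos, fun x hx _ => ?_⟩
      rw [ha] at hx
      obtain ⟨n, hn⟩ := AddSubgroup.mem_closure_singleton.mp hx; simp [← hn]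
    · right
      refine ⟨|a|, abs_pos.mpr h0, fun x hx hlt => ?_⟩
      rw [ha] at hx
      obtain ⟨n, rfl⟩ := AddSubgroup.mem_closure_singleton.mp hx
      rcases eq_or_ne n 0 with rfl | hn
      · simp
      · exfalso
        have : |a| * 1 ≤ |a| * |(n:ℝ)| := by
          apply mul_le_mul_of_nonneg_left _ (abs_nonneg a)
          have : (1:ℝ) ≤ |(n:ℝ)| := by
            rw [← Int.cast_abs]
            exact_mod_cast Int.one_le_abs (by exact_mod_cast hn)
          linarith
        rw [_root_.mul_one, mul_comm] at this
        rw [zsmul_eq_mul, abs_mul] at hlt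
        have hnn := le_abs_self (n • a)
        nlinarith [abs_nonneg a, abs_nonneg (n:ℝ)]

/-- behavior of one-parameter subgroups of a topological group with respect
to closed subgroups, and local injectivity of nontrivial one-parameter subgroups. -/
theorem statement_11 {H : Type*} [TopologicalSpace H] [Group H] [IsTopologicalGroup H]
    [T2Space H] (X : ℝ → H) (hcont : Continuous X) (hzero : X 0 = 1)
    (hadd : ∀ s t : ℝ, X (s + t) = X s * X t) :
    (∀ H₁ : Subgroup H, IsClosed (H₁ : Set H) →
        Set.range X ⊆ (H₁ : Set H) ∨ ∃ D ∈ 𝓝 (0 : ℝ), X '' D ∩ (H₁ : Set H) = {1}) ∧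
      ((∃ t : ℝ, X t ≠ 1) → ∃ D ∈ 𝓝 (0 : ℝ), Set.InjOn X D) := by
  
  have hinv : ∀ t : ℝ, X (-t) = (X t)⁻¹ := by
    intro t
    have h1 : X t * X (-t) = 1 := by rw [← hadd]; simp [hzero]
    exact eq_inv_of_mul_eq_one_right h1
  have key : ∀ H₁ : Subgroup H, IsClosed (H₁ : Set H) →
      Set.range X ⊆ (H₁ : Set H) ∨ ∃ ε : ℝ, 0 < ε ∧ ∀ t : ℝ, |t| < ε → X t ∈ H₁ → t = 0 := by
    intro H₁ hcl
    set S : AddSubgroup ℝ :=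
      { carrier := X ⁻¹' (H₁ : Set H)
        zero_mem' := by simp only [Set.mem_preimage, hzero, SetLike.mem_coe]; exact one_mem _
        add_mem' := fun {a b} ha hb => by
          simp only [Set.mem_preimage, SetLike.mem_coe] at *
          rw [hadd]; exact mul_mem ha hb
        neg_mem' := fun {a} ha => by
          simp only [Set.mem_preimage, SetLike.mem_coe] at *
          rw [hinv]; exact inv_mem ha } with hSdef
    have hScl : IsClosed (S : Set ℝ) := hcl.preimage hcont
    rcases closed_subgroup_real S hScl with h | ⟨ε, hε, hker⟩
    · left
      rintro _ ⟨t, rfl⟩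
      have : t ∈ S := h ▸ AddSubgroup.mem_top t
      exact this
    · right
      exact ⟨ε, hε, fun t ht hmem => hker t hmem ht⟩
  constructor
  · intro H₁ hcl
    rcases key H₁ hcl with h | ⟨ε, hε, hker⟩
    · exact Or.inl h
    · refine Or.inr ⟨Metric.ball 0 ε, Metric.ball_mem_nhds 0 hε, ?_⟩
      apply Set.eq_singleton_iff_unique_mem.mpr
      constructor
      · exact ⟨⟨0, by simpa using hε, hzero⟩, one_mem H₁⟩
      · rintro x ⟨⟨t, ht, rfl⟩, hxH⟩
        rw [hker t (by simpa [Real.dist_eq] using ht) hxH, hzero]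
  · rintro ⟨t₀, ht₀⟩
    have hbot : IsClosed ((⊥ : Subgroup H) : Set H) := by
      simpa [Subgroup.coe_bot] using isClosed_singleton (x := (1 : H))
    rcases key ⊥ hbot with h | ⟨ε, hε, hker⟩
    · exact absurd (h ⟨t₀, rfl⟩) (by simpa using ht₀)
    · refine ⟨Metric.ball 0 (ε / 2), Metric.ball_mem_nhds 0 (by linarith), ?_⟩
      intro s hs t ht hst
      have hmem : X (s - t) ∈ (⊥ : Subgroup H) := by
        have : X (s - t) = 1 := by
          have := hadd (s - t) t
          simp only [sub_add_cancel] at this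
          rw [hst] at this
          exact right_eq_mul.mp this
        simp [this]
      have hd : |s - t| < ε := by
        simp only [Metric.mem_ball, Real.dist_eq, sub_zero] at hs ht
        calc |s - t| ≤ |s| + |t| := abs_sub _ _
          _ < ε := by linarith
      have := hker (s - t) hd hmem
      linarith [sub_eq_zero.mp this]
end

section
/- Let H be a normal sublocal group of G with normalizing neighborhood V, and let W be a symmetric open neighborhood of 1 with W ⊆ U₆ and W⁶ ⊆ V. Then: (1) the relation E_H on W defined by E_H(x,y) ⟺ x⁻¹y ∈ H is an equivalence relation on W; (2) for x,y ∈ W, E_H(x,y) holds if and only if (xH) ∩ W = (yH) ∩ W, and the E_H-equivalence class of x equals (xH) ∩ W. -/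
open scoped Topology Manifold ENNReal

open LocalGroup

section Helpers
variable {G : Type*} [TopologicalSpace G] (L : LocalGroup G)

lemma rep_singleton (a : G) : L.Represents [a] a := by
  rw [LocalGroup.Represents]

lemma rep_cons_cons (a c : G) (l : List G) (b : G) :
    L.Represents (a :: c :: l) b ↔
      ∀ i : ℕ, 1 ≤ i → i < (a :: c :: l).length →
        ∃ b₁ b₂ : G, L.Represents ((a :: c :: l).take i) b₁ ∧
          L.Represents ((a :: c :: l).drop i) b₂ ∧ (b₁, b₂) ∈ L.Omega ∧ L.mul b₁ b₂ = b := by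
  rw [LocalGroup.Represents]

lemma rep_two_iff (a c b : G) :
    L.Represents [a, c] b ↔ (a, c) ∈ L.Omega ∧ L.mul a c = b := by
  rw [rep_cons_cons]
  constructor
  · intro h
    obtain ⟨b₁, b₂, h1, h2, h3, h4⟩ := h 1 le_rfl (by simp)
    simp only [List.take, List.drop] at h1 h2
    rw [LocalGroup.Represents] at h1 h2
    subst h1; subst h2
    exact ⟨h3, h4⟩
  · rintro ⟨hΩ, hm⟩ i h1 h2
    simp only [List.length_cons, List.length_nil] at h2
    have : i = 1 := by omega
    subst this
    exact ⟨a, c, by simpa using rep_singleton L a, by simpa using rep_singleton L c, hΩ, hm⟩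

lemma rep_three (a c d b : G) (h : L.Represents [a, c, d] b) :
    ((c, d) ∈ L.Omega ∧ (a, L.mul c d) ∈ L.Omega ∧ L.mul a (L.mul c d) = b) ∧
      ((a, c) ∈ L.Omega ∧ (L.mul a c, d) ∈ L.Omega ∧ L.mul (L.mul a c) d = b) := by
  rw [rep_cons_cons] at h
  obtain ⟨b₁, b₂, h1, h2, h3, h4⟩ := h 1 le_rfl (by simp)
  obtain ⟨c₁, c₂, g1, g2, g3, g4⟩ := h 2 (by omega) (by simp)
  simp only [List.take, List.drop] at h1 h2 g1 g2
  rw [LocalGroup.Represents] at h1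
  rw [LocalGroup.Represents] at g2
  rw [rep_two_iff] at h2 g1
  subst h1; subst g2
  obtain ⟨h2Ω, rfl⟩ := h2
  obtain ⟨g1Ω, rfl⟩ := g1
  exact ⟨⟨h2Ω, h3, h4⟩, ⟨g1Ω, g3, g4⟩⟩

lemma rep_pad : ∀ (n : ℕ) (l : List G), l.length = n → l ≠ [] → ∀ b : G,
    L.Represents l b → L.Represents (l ++ [L.one]) b := by
  intro n
  induction n using Nat.strong_induction_on with
  | _ n ih =>
    intro l hlen hne b hb
    match l, hb with
    | [a], hb =>
      rw [LocalGroup.Represents] at hb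
      rw [show [a] ++ [L.one] = [a, L.one] from rfl, rep_two_iff, hb]
      exact ⟨L.pair_one_right a, L.mul_one a⟩
    | a :: c :: l', hb =>
      rw [rep_cons_cons] at hb
      rw [show (a :: c :: l') ++ [L.one] = a :: c :: (l' ++ [L.one]) from rfl, rep_cons_cons]
      intro i h1 h2
      simp only [List.length_cons, List.length_append, List.length_nil] at h2
      rcases lt_or_ge i (l'.length + 2) with hi | hi
      · obtain ⟨b₁, b₂, r1, r2, r3, r4⟩ := hb i h1 (by simp; omega)
        refine ⟨b₁, b₂, ?_, ?_, r3, r4⟩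
        · have : (a :: c :: (l' ++ [L.one])).take i = (a :: c :: l').take i := by
            rw [show a :: c :: (l' ++ [L.one]) = (a :: c :: l') ++ [L.one] from rfl]
            rw [List.take_append_of_le_length (by simp; omega)]
          rw [this]; exact r1
        · have hdrop : (a :: c :: (l' ++ [L.one])).drop i
              = ((a :: c :: l').drop i) ++ [L.one] := by
            rw [show a :: c :: (l' ++ [L.one]) = (a :: c :: l') ++ [L.one] from rfl]
            rw [List.drop_append_of_le_length (by simp; omega)]
          rw [hdrop]
          have hlen' : ((a :: c :: l').drop i).length < n := by
            simp only [List.length_drop, List.length_cons] at *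
            omega
          have hne' : (a :: c :: l').drop i ≠ [] := by
            intro hcon
            have := congrArg List.length hcon
            simp only [List.length_drop, List.length_cons, List.length_nil] at this
            omega
          exact ih _ (hlen ▸ hlen') _ rfl hne' _ r2
      · have : i = l'.length + 2 := by omega
        subst this
        refine ⟨b, L.one, ?_, ?_, L.pair_one_right b, L.mul_one b⟩
        · have : (a :: c :: (l' ++ [L.one])).take (l'.length + 2) = a :: c :: l' := by
            rw [show a :: c :: (l' ++ [L.one]) = (a :: c :: l') ++ [L.one] from rfl,
              show l'.length + 2 = (a :: c :: l').length by simp, List.take_left]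
          rw [this, rep_cons_cons]
          exact hb
        · have : (a :: c :: (l' ++ [L.one])).drop (l'.length + 2) = [L.one] := by
            rw [show a :: c :: (l' ++ [L.one]) = (a :: c :: l') ++ [L.one] from rfl,
              show l'.length + 2 = (a :: c :: l').length by simp, List.drop_left]
          rw [this]
          exact rep_singleton L L.one

lemma rep_mem_pow6 {W : Set G} (h1 : L.one ∈ W) :
    ∀ (k : ℕ) (l : List G), l ≠ [] → l.length + k = 6 → (∀ a ∈ l, a ∈ W) →
      ∀ b : G, L.Represents l b → b ∈ L.setPow W 6 := by
  intro k
  induction k with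
  | zero =>
    intro l hne hlen hmem b hb
    exact ⟨l, by omega, hmem, hb⟩
  | succ k ih =>
    intro l hne hlen hmem b hb
    refine ih (l ++ [L.one]) (by simp) (by simp; omega) ?_ b (rep_pad L l.length l rfl hne b hb)
    intro a ha
    rcases List.mem_append.1 ha with h | h
    · exact hmem a h
    · simp only [List.mem_singleton] at h; subst h; exact h1

end Helpers


/-- the coset relation `E_H` is an equivalence relation on `W`, and its
classes are the local cosets `xH ∩ W`. -/
theorem statement_13 {G : Type*} [TopologicalSpace G] [T2Space G]
    (L : LocalGroup G) (hstd : L.Std) (Un : ℕ → Set G) (hUn : L.IsProdChain Un)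
    (H V : Set G) (hHV : L.IsNormalSublocalGroup H V)
    (W : Set G) (hWo : IsOpen W) (h1W : L.one ∈ W) (hWsym : L.IsSymmetric W)
    (hW6 : W ⊆ Un 6) (hWpow : L.setPow W 6 ⊆ V) :
    (∀ x ∈ W, L.mul (L.inv x) x ∈ H) ∧
      (∀ x ∈ W, ∀ y ∈ W, L.mul (L.inv x) y ∈ H → L.mul (L.inv y) x ∈ H) ∧
      (∀ x ∈ W, ∀ y ∈ W, ∀ z ∈ W, L.mul (L.inv x) y ∈ H → L.mul (L.inv y) z ∈ H →
        L.mul (L.inv x) z ∈ H) ∧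
      (∀ x ∈ W, ∀ y ∈ W, (L.mul (L.inv x) y ∈ H ↔
        {z | ∃ h ∈ H, (x, h) ∈ L.Omega ∧ L.mul x h = z} ∩ W =
          {z | ∃ h ∈ H, (y, h) ∈ L.Omega ∧ L.mul y h = z} ∩ W)) ∧
      ∀ x ∈ W, {y | y ∈ W ∧ L.mul (L.inv x) y ∈ H} =
        {z | ∃ h ∈ H, (x, h) ∈ L.Omega ∧ L.mul x h = z} ∩ W := by
  obtain ⟨⟨h1H, hVo, h1V, hHsubV, hcl, hHinv, hHmul⟩, hVsym, hnorm⟩ := hHV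
  have hΛ : ∀ g : G, g ∈ L.Lambda := fun g => hstd.1 ▸ Set.mem_univ g
  have hinvW : ∀ a ∈ W, L.inv a ∈ W := by
    intro a ha
    rw [← hWsym.2]
    exact ⟨a, ha, rfl⟩
  have hW5 : W ⊆ Un 5 := fun a ha => (hUn 5 (by norm_num)).2.2.2.1 (hW6 ha)
  have hW4 : W ⊆ Un 4 := fun a ha => (hUn 4 (by norm_num)).2.2.2.1 (hW5 ha)
  have hW3 : W ⊆ Un 3 := fun a ha => (hUn 3 (by norm_num)).2.2.2.1 (hW4 ha)
  have hW2 : W ⊆ Un 2 := fun a ha => (hUn 2 (by norm_num)).2.2.2.1 (hW3 ha)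
  -- products of two elements of W are defined
  have pair2 : ∀ a ∈ W, ∀ c ∈ W, (a, c) ∈ L.Omega ∧ L.Represents [a, c] (L.mul a c) := by
    intro a ha c hc
    obtain ⟨b, hb⟩ := (hUn 2 (by norm_num)).2.2.2.2 [a, c] rfl (by
      intro g hg
      fin_cases hg
      exacts [hW2 ha, hW2 hc])
    rw [rep_two_iff] at hb
    exact ⟨hb.1, (rep_two_iff L a c (L.mul a c)).2 ⟨hb.1, rfl⟩⟩
  have inv_inv : ∀ a : G, L.inv (L.inv a) = a := by
    intro a
    have hΩ1 : (L.mul a (L.inv a), L.inv (L.inv a)) ∈ L.Omega := by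
      rw [L.mul_inv_self a (hΛ a)]; exact L.pair_one_left _
    have hΩ2 : (a, L.mul (L.inv a) (L.inv (L.inv a))) ∈ L.Omega := by
      rw [L.mul_inv_self (L.inv a) (hΛ _)]; exact L.pair_one_right a
    have h := L.assoc a (L.inv a) (L.inv (L.inv a)) (L.mem_inv_right a (hΛ a))
      (L.mem_inv_right (L.inv a) (hΛ _)) hΩ1 hΩ2
    rw [L.mul_inv_self a (hΛ a), L.one_mul, L.mul_inv_self (L.inv a) (hΛ _), L.mul_one] at h
    exact h
  -- membership of two-element products in V
  have mul2V : ∀ a ∈ W, ∀ c ∈ W, L.mul a c ∈ V := by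
    intro a ha c hc
    refine hWpow (rep_mem_pow6 L h1W 4 [a, c] (by simp) (by simp) ?_ _ (pair2 a ha c hc).2)
    intro g hg; fin_cases hg; exacts [ha, hc]
  -- symmetry
  have sym : ∀ x ∈ W, ∀ y ∈ W, L.mul (L.inv x) y ∈ H → L.mul (L.inv y) x ∈ H := by
    intro x hx y hy hxy
    have hΩ : (L.inv x, y) ∈ L.Omega := (pair2 _ (hinvW x hx) _ hy).1
    obtain ⟨hΩ', hinv_eq⟩ := hstd.2 (L.inv x) y hΩ
    rw [inv_inv] at hinv_eq
    have hthis := hHinv (L.mul (L.inv x) y) hxy (hΛ _) (by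
      rw [hinv_eq]; exact mul2V _ (hinvW y hy) _ hx)
    rwa [hinv_eq] at hthis
  -- transitivity
  have trans : ∀ x ∈ W, ∀ y ∈ W, ∀ z ∈ W, L.mul (L.inv x) y ∈ H → L.mul (L.inv y) z ∈ H →
      L.mul (L.inv x) z ∈ H := by
    intro x hx y hy z hz hxy hyz
    obtain ⟨b, hb⟩ := (hUn 4 (by norm_num)).2.2.2.2 [L.inv x, y, L.inv y, z] rfl (by
      intro g hg; fin_cases hg
      exacts [hW4 (hinvW x hx), hW4 hy, hW4 (hinvW y hy), hW4 hz])
    have hbV : b ∈ V := by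
      refine hWpow (rep_mem_pow6 L h1W 2 [L.inv x, y, L.inv y, z] (by simp) (by simp) ?_ _ hb)
      intro g hg; fin_cases hg
      exacts [hinvW x hx, hy, hinvW y hy, hz]
    rw [rep_cons_cons] at hb
    obtain ⟨b₁, b₂, r1, r2, rΩ, rm⟩ := hb 2 (by omega) (by simp)
    simp only [List.take, List.drop] at r1 r2
    rw [rep_two_iff] at r1 r2
    obtain ⟨r1Ω, r1e⟩ := r1
    obtain ⟨r2Ω, r2e⟩ := r2
    subst r1e; subst r2e
    obtain ⟨c₁, c₂, s1, s2, sΩ, sm⟩ := hb 1 le_rfl (by simp)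
    simp only [List.take, List.drop] at s1 s2
    rw [LocalGroup.Represents] at s1
    have s3 := (rep_three L y (L.inv y) z c₂ s2).2
    have hc₂ : c₂ = z := by rw [← s3.2.2, L.mul_inv_self y (hΛ y), L.one_mul]
    have hbval : b = L.mul (L.inv x) z := by rw [← sm, s1, hc₂]
    have hbH : L.mul (L.mul (L.inv x) y) (L.mul (L.inv y) z) ∈ H := by
      refine hHmul _ hxy _ hyz rΩ ?_
      rw [rm]; exact hbV
    rw [rm, hbval] at hbH
    exact hbH
  -- classes are cosets
  have key : ∀ x ∈ W, {y | y ∈ W ∧ L.mul (L.inv x) y ∈ H} =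
      {z | ∃ h ∈ H, (x, h) ∈ L.Omega ∧ L.mul x h = z} ∩ W := by
    intro x hx
    ext z
    simp only [Set.mem_setOf_eq, Set.mem_inter_iff]
    constructor
    · rintro ⟨hzW, hxz⟩
      obtain ⟨b, hb⟩ := (hUn 3 (by norm_num)).2.2.2.2 [x, L.inv x, z] rfl (by
        intro g hg; fin_cases hg
        exacts [hW3 hx, hW3 (hinvW x hx), hW3 hzW])
      have h3 := rep_three L x (L.inv x) z b hb
      have hbz : b = z := by rw [← h3.2.2.2, L.mul_inv_self x (hΛ x), L.one_mul]
      exact ⟨⟨L.mul (L.inv x) z, hxz, h3.1.2.1, h3.1.2.2.trans hbz⟩, hzW⟩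
    · rintro ⟨⟨h, hH, hΩ, rfl⟩, hzW⟩
      refine ⟨hzW, ?_⟩
      have hΩ1 : (L.mul (L.inv x) x, h) ∈ L.Omega := by
        rw [L.inv_mul_self x (hΛ x)]; exact L.pair_one_left h
      have hΩ2 : (L.inv x, L.mul x h) ∈ L.Omega := (pair2 _ (hinvW x hx) _ hzW).1
      have hassoc := L.assoc (L.inv x) x h (L.mem_inv_left x (hΛ x)) hΩ hΩ1 hΩ2
      rw [L.inv_mul_self x (hΛ x), L.one_mul] at hassoc
      rw [← hassoc]
      exact hH
  refine ⟨fun x hx => by rw [L.inv_mul_self x (hΛ x)]; exact h1H, sym, trans, ?_, key⟩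
  intro x hx y hy
  constructor
  · intro hxy
    rw [← key x hx, ← key y hy]
    ext z
    simp only [Set.mem_setOf_eq]
    constructor
    · rintro ⟨hzW, hxz⟩
      exact ⟨hzW, trans y hy x hx z hzW (sym x hx y hy hxy) hxz⟩
    · rintro ⟨hzW, hyz⟩
      exact ⟨hzW, trans x hx y hy z hzW hxy hyz⟩
  · intro heq
    have hxmem : x ∈ {z | ∃ h ∈ H, (x, h) ∈ L.Omega ∧ L.mul x h = z} ∩ W :=
      ⟨⟨L.one, h1H, L.pair_one_right x, L.mul_one x⟩, hx⟩
    rw [heq, ← key y hy] at hxmem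
    exact sym y hy x hx hxmem.2
end

section
/- Suppose H and H′ are normal sublocal groups of G with normalizing neighborhoods V and V′ respectively, and H and H′ are equivalent, i.e. H ∩ U = H′ ∩ U for some open neighborhood U of 1. Let W and W′ be symmetric open neighborhoods of 1 with W ⊆ U₆, W⁶ ⊆ V and W′ ⊆ U₆, (W′)⁶ ⊆ V′. Then the local quotient groups (G/H)_W and (G/H′)_{W′} are locally isomorphic. -/
open scoped Topology Manifold ENNReal

open LocalGroup

namespace S15
open LocalGroup Set

variable {G : Type*} [TopologicalSpace G] (L : LocalGroup G)

section Basic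
variable (hstd : L.Std)
include hstd

theorem lam (x : G) : x ∈ L.Lambda := by rw [hstd.1]; trivial

theorem mul_inv (x : G) : L.mul x (L.inv x) = L.one := L.mul_inv_self x (lam L hstd x)
theorem inv_mul (x : G) : L.mul (L.inv x) x = L.one := L.inv_mul_self x (lam L hstd x)
theorem omega_inv_right (x : G) : (x, L.inv x) ∈ L.Omega := L.mem_inv_right x (lam L hstd x)
theorem omega_inv_left (x : G) : (L.inv x, x) ∈ L.Omega := L.mem_inv_left x (lam L hstd x)

theorem inv_invol (x : G) : L.inv (L.inv x) = x := by
  have h1 : (L.inv (L.inv x), L.inv x) ∈ L.Omega := omega_inv_left L hstd _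
  have h2 : (L.inv x, x) ∈ L.Omega := omega_inv_left L hstd x
  have h3 : (L.mul (L.inv (L.inv x)) (L.inv x), x) ∈ L.Omega := by
    rw [inv_mul L hstd]; exact L.pair_one_left x
  have h4 : (L.inv (L.inv x), L.mul (L.inv x) x) ∈ L.Omega := by
    rw [inv_mul L hstd]; exact L.pair_one_right _
  have := L.assoc _ _ _ h1 h2 h3 h4
  rw [inv_mul L hstd, inv_mul L hstd, L.one_mul, L.mul_one] at this
  exact this.symm

theorem inv_one : L.inv L.one = L.one := by
  have := inv_mul L hstd L.one
  rwa [L.mul_one] at this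

theorem inv_mul_rev {x y : G} (h : (x, y) ∈ L.Omega) :
    L.inv (L.mul x y) = L.mul (L.inv y) (L.inv x) := (hstd.2 x y h).2

end Basic

section Rep

theorem rep_cons_iff (a c : G) (t : List G) (b : G) :
    L.Represents (a :: c :: t) b ↔ ∀ i : ℕ, 1 ≤ i → i < (a :: c :: t).length →
      ∃ b₁ b₂ : G, L.Represents ((a :: c :: t).take i) b₁ ∧
        L.Represents ((a :: c :: t).drop i) b₂ ∧ (b₁, b₂) ∈ L.Omega ∧ L.mul b₁ b₂ = b := by
  rw [Represents.eq_def]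

theorem rep_nil : L.Represents [] L.one := by rw [Represents.eq_def]
theorem rep_nil_iff (b : G) : L.Represents [] b ↔ b = L.one := by rw [Represents.eq_def]
theorem rep_single (a : G) : L.Represents [a] a := by rw [Represents.eq_def]
theorem rep_single_iff (a b : G) : L.Represents [a] b ↔ b = a := by rw [Represents.eq_def]

theorem rep_unique : ∀ (l : List G) (b b' : G),
    L.Represents l b → L.Represents l b' → b = b'
  | [], b, b', h, h' => by
      rw [rep_nil_iff] at h h'; rw [h, h']
  | [a], b, b', h, h' => by
      rw [rep_single_iff] at h h'; rw [h, h']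
  | a :: c :: t, b, b', h, h' => by
      rw [rep_cons_iff] at h h'
      obtain ⟨b₁, b₂, hr1, hr2, _, hm⟩ := h 1 le_rfl (by simp)
      obtain ⟨b₁', b₂', hr1', hr2', _, hm'⟩ := h' 1 le_rfl (by simp)
      simp only [List.take, List.drop] at hr1 hr2 hr1' hr2'
      rw [rep_single_iff] at hr1 hr1'
      have e2 : b₂ = b₂' := rep_unique (c :: t) b₂ b₂' hr2 hr2'
      rw [← hm, ← hm', hr1, hr1', e2]

theorem rep_split {l₁ l₂ : List G} {b : G} (h : L.Represents (l₁ ++ l₂) b)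
    (h1 : l₁ ≠ []) (h2 : l₂ ≠ []) :
    ∃ b₁ b₂ : G, L.Represents l₁ b₁ ∧ L.Represents l₂ b₂ ∧
      (b₁, b₂) ∈ L.Omega ∧ L.mul b₁ b₂ = b := by
  have hlen : 2 ≤ (l₁ ++ l₂).length := by
    rw [List.length_append]
    have := List.length_pos_iff.mpr h1
    have := List.length_pos_iff.mpr h2
    omega
  obtain ⟨a, t, hat⟩ := List.exists_cons_of_ne_nil (l := l₁ ++ l₂)
    (by intro hh; rw [hh] at hlen; simp at hlen)
  obtain ⟨c, t', hct⟩ := List.exists_cons_of_ne_nil (l := t)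
    (by intro hh; rw [hh] at hat; rw [hat] at hlen; simp at hlen)
  rw [hct] at hat
  rw [hat, rep_cons_iff] at h
  have hi1 : 1 ≤ l₁.length := List.length_pos_iff.mpr h1
  have hi2 : l₁.length < (a :: c :: t').length := by
    rw [← hat, List.length_append]
    have := List.length_pos_iff.mpr h2
    omega
  obtain ⟨b₁, b₂, hr1, hr2, ho, hm⟩ := h l₁.length hi1 hi2
  rw [← hat] at hr1 hr2
  rw [List.take_left] at hr1
  rw [List.drop_left] at hr2
  exact ⟨b₁, b₂, hr1, hr2, ho, hm⟩

theorem rep_pad : ∀ (l : List G) (b : G), L.Represents l b →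
    L.Represents (l ++ [L.one]) b
  | [], b, h => by
      rw [rep_nil_iff] at h; rw [h]; exact rep_single L L.one
  | [a], b, h => by
      rw [rep_single_iff] at h
      subst h
      rw [show ([b] ++ [L.one] : List G) = [b, L.one] from rfl, rep_cons_iff]
      intro i h1 h2
      simp only [List.length] at h2
      interval_cases i
      exact ⟨b, L.one, rep_single L b, rep_single L L.one,
        L.pair_one_right b, L.mul_one b⟩
  | a :: c :: t, b, h => by
      have hlen : (a :: c :: t).length = t.length + 2 := by simp
      have key : ∀ i : ℕ, 1 ≤ i → i < ((a :: c :: t) ++ [L.one]).length →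
          ∃ b₁ b₂ : G, L.Represents (((a :: c :: t) ++ [L.one]).take i) b₁ ∧
            L.Represents (((a :: c :: t) ++ [L.one]).drop i) b₂ ∧
            (b₁, b₂) ∈ L.Omega ∧ L.mul b₁ b₂ = b := by
        intro i hi1 hi2
        rw [List.length_append] at hi2
        simp only [List.length_cons, List.length_nil] at hi2
        rcases lt_or_ge i (a :: c :: t).length with hc | hc
        · rw [rep_cons_iff] at h
          obtain ⟨b₁, b₂, hr1, hr2, ho, hm⟩ := h i hi1 hc
          refine ⟨b₁, b₂, ?_, ?_, ho, hm⟩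
          · rw [List.take_append_of_le_length (le_of_lt hc)]; exact hr1
          · rw [List.drop_append_of_le_length (le_of_lt hc)]
            exact rep_pad _ _ hr2
        · have hceq : i = (a :: c :: t).length := by
            simp only [List.length_cons] at hc hi2 ⊢; omega
          subst hceq
          refine ⟨b, L.one, ?_, ?_, L.pair_one_right b, L.mul_one b⟩
          · rw [List.take_left]; exact h
          · rw [List.drop_left]; exact rep_single L L.one
      rw [show ((a :: c :: t) ++ [L.one]) = a :: c :: (t ++ [L.one]) by simp] at key ⊢
      rw [rep_cons_iff]
      exact key
  termination_by l => l.length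
  decreasing_by
    all_goals simp_all [List.length_drop]

theorem rep_pads (l : List G) (b : G) (h : L.Represents l b) (k : ℕ) :
    L.Represents (l ++ List.replicate k L.one) b := by
  induction k with
  | zero => simpa using h
  | succ n ih =>
      have := rep_pad L _ _ ih
      rwa [List.append_assoc, ← List.replicate_succ' ] at this

open Classical in
noncomputable def wp (l : List G) : G :=
  if h : ∃ b, L.Represents l b then h.choose else L.one

theorem wp_eq {l : List G} {b : G} (h : L.Represents l b) : wp L l = b := by
  rw [wp, dif_pos ⟨b, h⟩]
  exact rep_unique L l _ b (Exists.choose_spec (⟨b, h⟩ : ∃ b, L.Represents l b)) h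

theorem wp_single (a : G) : wp L [a] = a := wp_eq L (rep_single L a)
theorem wp_nil : wp L [] = L.one := wp_eq L (rep_nil L)

end Rep
end S15
set_option linter.unusedSectionVars false
namespace S15
open LocalGroup Set

variable {G : Type*} [TopologicalSpace G] (L : LocalGroup G)

section Chain
variable (hstd : L.Std) (Un : ℕ → Set G) (hUn : L.IsProdChain Un)
include hstd hUn

theorem chain_mono {m n : ℕ} (h1 : 1 ≤ m) (h2 : m ≤ n) : Un n ⊆ Un m := by
  induction n with
  | zero => omega
  | succ k ih =>
      rcases Nat.lt_or_ge m (k+1) with hc | hc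
      · have hk1 : 1 ≤ k := by omega
        exact fun x hx => ih (by omega) ((hUn k hk1).2.2.2.1 hx)
      · have : m = k + 1 := by omega
        subst this
        exact fun x hx => hx

theorem chain_inv {n : ℕ} (hn : 1 ≤ n) {x : G} (hx : x ∈ Un n) : L.inv x ∈ Un n := by
  have hsym := (hUn n hn).2.2.1.2
  rw [← hsym] at hx
  obtain ⟨u, hu, he⟩ := hx
  rw [← he, inv_invol L hstd]
  exact hu

theorem rep_wp {l : List G} (hl : ∀ a ∈ l, a ∈ Un 6) (h1 : 1 ≤ l.length)
    (h6 : l.length ≤ 6) : L.Represents l (wp L l) := by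
  obtain ⟨b, hb⟩ := (hUn l.length h1).2.2.2.2 l rfl
    (fun a ha => chain_mono L hstd Un hUn h1 h6 (hl a ha))
  rw [wp_eq L hb]; exact hb

theorem wp_append {l₁ l₂ : List G} (hl1 : ∀ a ∈ l₁, a ∈ Un 6) (hl2 : ∀ a ∈ l₂, a ∈ Un 6)
    (h1 : l₁ ≠ []) (h2 : l₂ ≠ []) (h6 : l₁.length + l₂.length ≤ 6) :
    (wp L l₁, wp L l₂) ∈ L.Omega ∧ L.mul (wp L l₁) (wp L l₂) = wp L (l₁ ++ l₂) := by
  have hl : ∀ a ∈ l₁ ++ l₂, a ∈ Un 6 := by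
    intro a ha; rcases List.mem_append.mp ha with h | h
    exacts [hl1 a h, hl2 a h]
  have hrep := rep_wp L hstd Un hUn hl
    (by rw [List.length_append]; have := List.length_pos_iff.mpr h1; omega)
    (by rw [List.length_append]; exact h6)
  obtain ⟨b₁, b₂, hr1, hr2, ho, hm⟩ := rep_split L hrep h1 h2
  rw [wp_eq L hr1, wp_eq L hr2]
  exact ⟨ho, hm⟩

theorem omega2 {x y : G} (hx : x ∈ Un 6) (hy : y ∈ Un 6) : (x, y) ∈ L.Omega := by
  have := (wp_append L hstd Un hUn (l₁ := [x]) (l₂ := [y])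
    (by simpa using hx) (by simpa using hy) (by simp) (by simp) (by simp)).1
  rwa [wp_single, wp_single] at this

theorem wp_pair {x y : G} (hx : x ∈ Un 6) (hy : y ∈ Un 6) :
    wp L [x, y] = L.mul x y := by
  have := (wp_append L hstd Un hUn (l₁ := [x]) (l₂ := [y])
    (by simpa using hx) (by simpa using hy) (by simp) (by simp) (by simp)).2
  rw [wp_single, wp_single] at this
  exact this.symm

theorem wp_cons {x : G} {l : List G} (hx : x ∈ Un 6) (hl : ∀ a ∈ l, a ∈ Un 6)
    (hne : l ≠ []) (h6 : l.length + 1 ≤ 6) :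
    wp L (x :: l) = L.mul x (wp L l) ∧ (x, wp L l) ∈ L.Omega := by
  have := wp_append L hstd Un hUn (l₁ := [x]) (l₂ := l)
    (by simpa using hx) hl (by simp) hne (by simp; omega)
  rw [wp_single] at this
  exact ⟨this.2.symm, this.1⟩

theorem wp_pair_one (x : G) (hx : x ∈ Un 6) : wp L [x, L.inv x] = L.one := by
  have hix : L.inv x ∈ Un 6 := chain_inv L hstd Un hUn (by omega) hx
  rw [wp_pair L hstd Un hUn hx hix, mul_inv L hstd]

theorem wp_cancel {l₁ l₂ : List G} (x : G) (hx : x ∈ Un 6)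
    (hl1 : ∀ a ∈ l₁, a ∈ Un 6) (hl2 : ∀ a ∈ l₂, a ∈ Un 6)
    (h4 : l₁.length + l₂.length ≤ 4) :
    wp L (l₁ ++ x :: L.inv x :: l₂) = wp L (l₁ ++ l₂) := by
  have hix : L.inv x ∈ Un 6 := chain_inv L hstd Un hUn (by omega) hx
  have hpair : ∀ a ∈ [x, L.inv x], a ∈ Un 6 := by
    intro a ha; simp at ha; rcases ha with h | h <;> subst h <;> assumption
  rcases eq_or_ne l₁ [] with rfl | hne1 <;> rcases eq_or_ne l₂ [] with rfl | hne2
  · simp only [List.nil_append, List.append_nil]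
    rw [show (x :: L.inv x :: [] : List G) = [x, L.inv x] from rfl,
      wp_pair_one L hstd Un hUn x hx, wp_nil]
  · simp only [List.nil_append]
    have := wp_append L hstd Un hUn (l₁ := [x, L.inv x]) (l₂ := l₂) hpair hl2
      (by simp) hne2 (by simp at h4 ⊢; omega)
    rw [wp_pair_one L hstd Un hUn x hx, L.one_mul] at this
    exact this.2.symm
  · simp only [List.append_nil]
    have := wp_append L hstd Un hUn (l₁ := l₁) (l₂ := [x, L.inv x]) hl1 hpair
      hne1 (by simp) (by simp at h4 ⊢; omega)
    rw [wp_pair_one L hstd Un hUn x hx, L.mul_one] at this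
    exact this.2.symm
  · have hmid : wp L ([x, L.inv x] ++ l₂) = wp L l₂ := by
      have := wp_append L hstd Un hUn (l₁ := [x, L.inv x]) (l₂ := l₂) hpair hl2
        (by simp) hne2 (by simp at h4 ⊢; omega)
      rw [wp_pair_one L hstd Un hUn x hx, L.one_mul] at this
      exact this.2.symm
    have hmid2 : ∀ a ∈ [x, L.inv x] ++ l₂, a ∈ Un 6 := by
      intro a ha; rcases List.mem_append.mp ha with h | h
      exacts [hpair a h, hl2 a h]
    have e1 := wp_append L hstd Un hUn (l₁ := l₁) (l₂ := [x, L.inv x] ++ l₂) hl1 hmid2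
      hne1 (by simp [hne2]) (by simp at h4 ⊢; omega)
    have e2 := wp_append L hstd Un hUn (l₁ := l₁) (l₂ := l₂) hl1 hl2 hne1 hne2
      (by omega)
    rw [show l₁ ++ x :: L.inv x :: l₂ = l₁ ++ ([x, L.inv x] ++ l₂) from rfl]
    rw [← e1.2, hmid, e2.2]

theorem wp_inv_pair {x y : G} (hx : x ∈ Un 6) (hy : y ∈ Un 6) :
    L.inv (wp L [x, y]) = wp L [L.inv y, L.inv x] := by
  have hix := chain_inv L hstd Un hUn (by omega) hx
  have hiy := chain_inv L hstd Un hUn (by omega) hy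
  rw [wp_pair L hstd Un hUn hx hy, wp_pair L hstd Un hUn hiy hix,
    inv_mul_rev L hstd (omega2 L hstd Un hUn hx hy)]

theorem wp_inv3 {x y z : G} (hx : x ∈ Un 6) (hy : y ∈ Un 6) (hz : z ∈ Un 6) :
    L.inv (wp L [x, y, z]) = wp L [L.inv z, L.inv y, L.inv x] := by
  have hix := chain_inv L hstd Un hUn (by omega) hx
  have hiy := chain_inv L hstd Un hUn (by omega) hy
  have hiz := chain_inv L hstd Un hUn (by omega) hz
  have e1 := wp_append L hstd Un hUn (l₁ := [x, y]) (l₂ := [z])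
    (by intro a ha; simp at ha; rcases ha with h|h <;> subst h <;> assumption)
    (by simpa using hz) (by simp) (by simp) (by simp)
  have e2 := wp_append L hstd Un hUn (l₁ := [L.inv z]) (l₂ := [L.inv y, L.inv x])
    (by simpa using hiz)
    (by intro a ha; simp at ha; rcases ha with h|h <;> subst h <;> assumption)
    (by simp) (by simp) (by simp)
  rw [show ([x,y] ++ [z] : List G) = [x,y,z] from rfl] at e1
  rw [show ([L.inv z] ++ [L.inv y, L.inv x] : List G) = [L.inv z, L.inv y, L.inv x]
    from rfl] at e2
  rw [← e1.2, inv_mul_rev L hstd e1.1, wp_single, ← e2.2, wp_single,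
    wp_inv_pair L hstd Un hUn hx hy]

end Chain
end S15
namespace S15
open LocalGroup Set

variable {G : Type*} [TopologicalSpace G] (L : LocalGroup G)

section Side
variable (hstd : L.Std) (Un : ℕ → Set G) (hUn : L.IsProdChain Un)
variable (H V W : Set G) (hH : L.IsSublocalGroup H V)
variable (h1W : L.one ∈ W) (hWsym : L.IsSymmetric W) (hW6 : W ⊆ Un 6)
variable (hWpow : L.setPow W 6 ⊆ V)

include hstd in
theorem W_inv (hWsym : L.IsSymmetric W) {x : G} (hx : x ∈ W) : L.inv x ∈ W := by
  rw [← hWsym.2] at hx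
  obtain ⟨u, hu, he⟩ := hx
  rw [← he, inv_invol L hstd]
  exact hu

include hstd hUn h1W hW6 hWpow in
theorem mem_V {l : List G} (hl : ∀ a ∈ l, a ∈ W) (h1 : 1 ≤ l.length)
    (h6 : l.length ≤ 6) : wp L l ∈ V := by
  apply hWpow
  refine ⟨l ++ List.replicate (6 - l.length) L.one, ?_, ?_, ?_⟩
  · simp; omega
  · intro a ha
    rcases List.mem_append.mp ha with h | h
    · exact hl a h
    · rw [List.eq_of_mem_replicate h]; exact h1W
  · exact rep_pads L l _ (rep_wp L hstd Un hUn (fun a ha => hW6 (hl a ha)) h1 h6) _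

include hstd hUn hH h1W hWsym hW6 hWpow in
theorem rel_equiv : Equivalence (L.quotRel H W) := by
  have hWU : ∀ x : ↥W, (x : G) ∈ Un 6 := fun x => hW6 x.2
  have hWiU : ∀ x : ↥W, L.inv (x : G) ∈ Un 6 :=
    fun x => chain_inv L hstd Un hUn (by omega) (hWU x)
  constructor
  · intro x
    show L.mul (L.inv ↑x) ↑x ∈ H
    rw [inv_mul L hstd]
    exact hH.1
  · intro x y hxy
    show L.mul (L.inv ↑y) ↑x ∈ H
    have hrev : L.inv (L.mul (L.inv ↑x) ↑y) = L.mul (L.inv ↑y) ↑x := by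
      rw [inv_mul_rev L hstd (omega2 L hstd Un hUn (hWiU x) (hWU y)), inv_invol L hstd]
    rw [← hrev]
    refine hH.2.2.2.2.2.1 _ hxy (lam L hstd _) ?_
    rw [hrev, ← wp_pair L hstd Un hUn (hWiU y) (hWU x)]
    exact mem_V L hstd Un hUn V W h1W hW6 hWpow
      (by intro a ha; simp at ha; rcases ha with h|h <;> rw [h]
          exacts [W_inv L hstd W hWsym y.2, x.2]) (by simp) (by simp)
  · intro x y z hxy hyz
    show L.mul (L.inv ↑x) ↑z ∈ H
    have exy : L.mul (L.inv ↑x) ↑y = wp L [L.inv ↑x, ↑y] :=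
      (wp_pair L hstd Un hUn (hWiU x) (hWU y)).symm
    have eyz : L.mul (L.inv ↑y) ↑z = wp L [L.inv ↑y, ↑z] :=
      (wp_pair L hstd Un hUn (hWiU y) (hWU z)).symm
    have happ := wp_append L hstd Un hUn (l₁ := [L.inv ↑x, ↑y]) (l₂ := [L.inv ↑y, ↑z])
      (by intro a ha; simp at ha; rcases ha with h|h <;> rw [h] <;>
            [exact hWiU x; exact hWU y])
      (by intro a ha; simp at ha; rcases ha with h|h <;> rw [h] <;>
            [exact hWiU y; exact hWU z])
      (by simp) (by simp) (by simp)
    have hcan : wp L ([L.inv ↑x, ↑y] ++ [L.inv ↑y, ↑z]) = wp L [L.inv ↑x, ↑z] := by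
      have := wp_cancel L hstd Un hUn (l₁ := [L.inv ↑x]) (l₂ := [↑z]) (↑y) (hWU y)
        (by simpa using hWiU x) (by simpa using hWU z) (by simp)
      simpa using this
    have hmul : L.mul (L.mul (L.inv ↑x) ↑y) (L.mul (L.inv ↑y) ↑z)
        = L.mul (L.inv ↑x) ↑z := by
      rw [exy, eyz, happ.2, hcan, wp_pair L hstd Un hUn (hWiU x) (hWU z)]
    rw [← hmul]
    refine hH.2.2.2.2.2.2 _ hxy _ hyz ?_ ?_
    · rw [exy, eyz]; exact happ.1
    · rw [hmul, ← wp_pair L hstd Un hUn (hWiU x) (hWU z)]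
      exact mem_V L hstd Un hUn V W h1W hW6 hWpow
        (by intro a ha; simp at ha; rcases ha with h|h <;> rw [h]
            exacts [W_inv L hstd W hWsym x.2, z.2]) (by simp) (by simp)

include hstd hUn hH h1W hWsym hW6 hWpow in
theorem mk_eq {a b : ↥W} :
    Quot.mk (L.quotRel H W) a = Quot.mk (L.quotRel H W) b ↔ L.quotRel H W a b := by
  rw [Quot.eq]
  exact Equivalence.eqvGen_iff
    (rel_equiv L hstd Un hUn H V W hH h1W hWsym hW6 hWpow)

end Side
end S15
namespace S15
open LocalGroup Set

variable {G : Type*} [TopologicalSpace G] (L : LocalGroup G)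

/-- The image of `S` in the quotient. -/
def Uq (H W S : Set G) : Set (L.QuotCarrier H W) :=
  Quot.mk (L.quotRel H W) '' {w : ↥W | (w : G) ∈ S}

open Classical in
/-- The comparison map between the two quotients, defined via choice. -/
noncomputable def fS (H W H' W' S : Set G) (hSW' : S ⊆ W') (h1W' : L.one ∈ W') :
    L.QuotCarrier H W → L.QuotCarrier H' W' := fun q =>
  if h : ∃ s : ↥W, (s : G) ∈ S ∧ Quot.mk (L.quotRel H W) s = q then
    Quot.mk (L.quotRel H' W') ⟨(h.choose : G), hSW' h.choose_spec.1⟩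
  else Quot.mk (L.quotRel H' W') ⟨L.one, h1W'⟩

section Main
variable (hstd : L.Std) (Un : ℕ → Set G) (hUn : L.IsProdChain Un)
variable (H V W : Set G) (hH : L.IsSublocalGroup H V)
variable (h1W : L.one ∈ W) (hWsym : L.IsSymmetric W) (hW6 : W ⊆ Un 6)
variable (hWpow : L.setPow W 6 ⊆ V) (hWo : IsOpen W)
variable (H' V' W' : Set G) (hH' : L.IsSublocalGroup H' V')
variable (h1W' : L.one ∈ W') (hW'sym : L.IsSymmetric W') (hW'6 : W' ⊆ Un 6)
variable (hW'pow : L.setPow W' 6 ⊆ V') (hW'o : IsOpen W')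
variable (U : Set G) (htr : ∀ z ∈ U, z ∈ H → z ∈ H')
variable (S : Set G) (hSo : IsOpen S) (h1S : L.one ∈ S)
variable (hSinv : ∀ x ∈ S, L.inv x ∈ S) (hSW : S ⊆ W) (hSW' : S ⊆ W')
variable (hS2 : ∀ x ∈ S, ∀ y ∈ S, L.mul x y ∈ U ∧ L.mul x y ∈ W ∧ L.mul x y ∈ W')
variable (hS3 : ∀ x ∈ S, ∀ y ∈ S, ∀ z ∈ S, wp L [x, y, z] ∈ U)


include htr hSinv hS2 in
theorem transfer_rel {s t : G} (hs : s ∈ S) (ht : t ∈ S)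
    (h : L.mul (L.inv s) t ∈ H) : L.mul (L.inv s) t ∈ H' :=
  htr _ (hS2 _ (hSinv _ hs) _ ht).1 h

include hstd hUn hH h1W hWsym hW6 hWpow htr hSinv hS2 hSW in
theorem fpi (s : ↥W) (hs : (s : G) ∈ S) :
    fS L H W H' W' S hSW' h1W' (Quot.mk (L.quotRel H W) s)
      = Quot.mk (L.quotRel H' W') ⟨(s : G), hSW' hs⟩ := by
  have hex : ∃ t : ↥W, (t : G) ∈ S ∧ Quot.mk (L.quotRel H W) t = Quot.mk (L.quotRel H W) s :=
    ⟨s, hs, rfl⟩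
  simp only [fS]
  rw [dif_pos hex]
  have hspec := hex.choose_spec
  have hrel : L.quotRel H W hex.choose s :=
    (mk_eq L hstd Un hUn H V W hH h1W hWsym hW6 hWpow).mp hspec.2
  apply Quot.sound
  show L.mul (L.inv (hex.choose : G)) (s : G) ∈ H'
  exact transfer_rel L H W H' W' U htr S hSinv hS2 hspec.1 hs hrel

include hstd hUn hW6 hWo hSo hSW hSW' hW'o in
theorem sat_open (O' : Set (L.QuotCarrier H' W')) (hO' : IsOpen O') :
    IsOpen {w : ↥W | ∃ s : G, ∃ hs : s ∈ S,
      L.mul (L.inv s) (w : G) ∈ H ∧ Quot.mk (L.quotRel H' W') ⟨s, hSW' hs⟩ ∈ O'} := by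
  classical
  set C : Set G := Subtype.val '' (Quot.mk (L.quotRel H' W') ⁻¹' O') with hCdef
  have hCopen : IsOpen C :=
    hW'o.isOpenMap_subtype_val _ (hO'.preimage continuous_quot_mk)
  have hCmem : ∀ (s : G) (hs : s ∈ W'),
      (Quot.mk (L.quotRel H' W') ⟨s, hs⟩ ∈ O' ↔ s ∈ C) := by
    intro s hs
    constructor
    · intro h; exact ⟨⟨s, hs⟩, h, rfl⟩
    · rintro ⟨t, ht, he⟩
      have : (⟨s, hs⟩ : ↥W') = t := Subtype.ext he.symm
      rw [this]; exact ht
  rw [isOpen_iff_mem_nhds]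
  rintro w ⟨s₀, hs₀, hrelH, hO⟩
  have hs₀W : s₀ ∈ W := hSW hs₀
  have hwU : (w : G) ∈ Un 6 := hW6 w.2
  have hsU : s₀ ∈ Un 6 := hW6 hs₀W
  have hiwU : L.inv (w : G) ∈ Un 6 := chain_inv L hstd Un hUn (by omega) hwU
  have hisU : L.inv s₀ ∈ Un 6 := chain_inv L hstd Un hUn (by omega) hsU
  set h : G := L.mul (L.inv s₀) (w : G) with hhdef
  have hih : L.inv h = wp L [L.inv (w : G), s₀] := by
    rw [hhdef, ← wp_pair L hstd Un hUn hisU hwU,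
      wp_inv_pair L hstd Un hUn hisU hwU, inv_invol L hstd]
  set φ : G → G := fun g => L.mul g (L.inv h) with hφdef
  have hφ : ∀ g ∈ W, φ g = wp L [g, L.inv (w : G), s₀] ∧ (g, L.inv h) ∈ L.Omega := by
    intro g hg
    have hgU : g ∈ Un 6 := hW6 hg
    have happ := wp_append L hstd Un hUn (l₁ := [g]) (l₂ := [L.inv (w : G), s₀])
      (by simpa using hgU)
      (by intro a ha; simp at ha; rcases ha with h|h <;> rw [h] <;> assumption)
      (by simp) (by simp) (by simp)
    rw [wp_single] at happ
    constructor
    · rw [hφdef]; simp only []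
      rw [hih, happ.2]; rfl
    · rw [hih]; exact happ.1
  have hφw : φ (w : G) = s₀ := by
    rw [(hφ _ w.2).1]
    have := wp_cancel L hstd Un hUn (l₁ := ([] : List G)) (l₂ := [s₀]) (w : G) hwU
      (by simp) (by simpa using hsU) (by simp)
    simp only [List.nil_append] at this
    rw [this, wp_single]
  have hcont : ContinuousOn φ W := by
    have hmap : Set.MapsTo (fun g : G => (g, L.inv h)) W L.Omega :=
      fun g hg => (hφ g hg).2
    have := ContinuousOn.comp L.continuousOn_mul
      ((continuous_id.prodMk continuous_const).continuousOn
        (s := W) (f := fun g : G => (g, L.inv h))) hmap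
    exact this
  have hkey : ∀ g : ↥W, φ (g : G) ∈ S → L.mul (L.inv (φ (g : G))) (g : G) = h := by
    intro g _
    have hgU : (g : G) ∈ Un 6 := hW6 g.2
    have higU : L.inv (g : G) ∈ Un 6 := chain_inv L hstd Un hUn (by omega) hgU
    rw [(hφ _ g.2).1, wp_inv3 L hstd Un hUn hgU hiwU hsU, inv_invol L hstd]
    have happ := wp_append L hstd Un hUn (l₁ := [L.inv s₀, (w : G), L.inv (g : G)])
      (l₂ := [(g : G)])
      (by intro a ha; simp at ha; rcases ha with h|h|h <;> rw [h] <;> assumption)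
      (by simpa using hgU) (by simp) (by simp) (by simp)
    rw [wp_single] at happ
    rw [happ.2]
    have hlist : ([L.inv s₀, (w : G), L.inv (g : G)] ++ [(g : G)] : List G)
        = [L.inv s₀, (w : G)] ++ L.inv (g : G) :: L.inv (L.inv (g : G)) :: [] := by
      rw [inv_invol L hstd]; rfl
    rw [hlist, wp_cancel L hstd Un hUn (L.inv (g : G)) higU
      (by intro a ha; simp at ha; rcases ha with h|h <;> rw [h] <;> assumption)
      (by simp) (by simp)]
    simp only [List.append_nil]
    rw [wp_pair L hstd Un hUn hisU hwU]
  have hO'' : IsOpen (W ∩ φ ⁻¹' (S ∩ C)) :=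
    hcont.isOpen_inter_preimage hWo (hSo.inter hCopen)
  have hwO'' : (w : G) ∈ W ∩ φ ⁻¹' (S ∩ C) := by
    refine ⟨w.2, ?_⟩
    rw [Set.mem_preimage, hφw]
    exact ⟨hs₀, (hCmem s₀ (hSW' hs₀)).1 hO⟩
  rw [mem_nhds_subtype]
  refine ⟨W ∩ φ ⁻¹' (S ∩ C), hO''.mem_nhds hwO'', ?_⟩
  rintro g ⟨hgW, hgφ⟩
  rw [Set.mem_preimage] at hgφ
  refine ⟨φ (g : G), hgφ.1, ?_, ?_⟩
  · rw [hkey g hgφ.1]; exact hrelH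
  · exact (hCmem _ (hSW' hgφ.1)).2 hgφ.2

include hstd hUn hH h1W hWsym hW6 hWpow htr hSinv hSW hSW' hS2 in
theorem mk_preimage (O' : Set (L.QuotCarrier H' W')) :
    Quot.mk (L.quotRel H W) ⁻¹' (fS L H W H' W' S hSW' h1W' ⁻¹' O' ∩ Uq L H W S)
      = {w : ↥W | ∃ s : G, ∃ hs : s ∈ S,
          L.mul (L.inv s) (w : G) ∈ H ∧ Quot.mk (L.quotRel H' W') ⟨s, hSW' hs⟩ ∈ O'} := by
  have hfpi := fpi L hstd Un hUn H V W hH h1W hWsym hW6 hWpow H' W' h1W' U htr S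
    hSinv hSW hSW' hS2
  have hmk := fun a b => mk_eq L hstd Un hUn H V W hH h1W hWsym hW6 hWpow (a := a) (b := b)
  ext w
  simp only [Set.mem_preimage, Set.mem_inter_iff, Set.mem_setOf_eq, Uq, Set.mem_image]
  constructor
  · rintro ⟨hfO, t, htS, hte⟩
    refine ⟨(t : G), htS, ?_, ?_⟩
    · have := (hmk t w).mp hte
      exact this
    · have he2 : fS L H W H' W' S hSW' h1W' (Quot.mk (L.quotRel H W) t)
          = Quot.mk (L.quotRel H' W') ⟨(t : G), hSW' htS⟩ := hfpi t htS
      rw [hte] at he2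
      rw [← he2]
      exact hfO
  · rintro ⟨s, hs, hrel, hO⟩
    have hte : Quot.mk (L.quotRel H W) (⟨s, hSW hs⟩ : ↥W) = Quot.mk (L.quotRel H W) w :=
      (hmk ⟨s, hSW hs⟩ w).mpr hrel
    refine ⟨?_, ⟨⟨s, hSW hs⟩, hs, hte⟩⟩
    rw [← hte, hfpi ⟨s, hSW hs⟩ hs]
    exact hO

include hstd hUn hH h1W hWsym hW6 hWpow hWo h1W' hW'o htr hSo hSinv hSW hSW' hS2 in
theorem Uq_open : IsOpen (Uq L H W S) := by
  rw [← (isQuotientMap_quot_mk (r := L.quotRel H W)).isOpen_preimage]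
  have e : Quot.mk (L.quotRel H W) ⁻¹' Uq L H W S
      = Quot.mk (L.quotRel H W) ⁻¹'
        (fS L H W H' W' S hSW' h1W' ⁻¹' (Set.univ) ∩ Uq L H W S) := by
    simp
  rw [e, mk_preimage L hstd Un hUn H V W hH h1W hWsym hW6 hWpow H' W' h1W' U htr S
    hSinv hSW hSW' hS2]
  exact sat_open L hstd Un hUn H W hW6 hWo H' W' hW'o S hSo hSW hSW' Set.univ isOpen_univ

include hstd hUn hH h1W hWsym hW6 hWpow hWo h1W' hW'o htr hSo hSinv hSW hSW' hS2 in
theorem fS_contOn : ContinuousOn (fS L H W H' W' S hSW' h1W') (Uq L H W S) := by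
  rw [continuousOn_iff']
  intro t ht
  refine ⟨fS L H W H' W' S hSW' h1W' ⁻¹' t ∩ Uq L H W S, ?_,
    by rw [Set.inter_assoc, Set.inter_self]⟩
  rw [← (isQuotientMap_quot_mk (r := L.quotRel H W)).isOpen_preimage,
    mk_preimage L hstd Un hUn H V W hH h1W hWsym hW6 hWpow H' W' h1W' U htr S
      hSinv hSW hSW' hS2]
  exact sat_open L hstd Un hUn H W hW6 hWo H' W' hW'o S hSo hSW hSW' t ht

variable (Q : LocalGroup (L.QuotCarrier H W)) (hQ : L.IsQuotStructure H W h1W Q)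
variable (Q' : LocalGroup (L.QuotCarrier H' W')) (hQ' : L.IsQuotStructure H' W' h1W' Q')

include hstd hUn hH h1W hWsym hW6 hWpow hWo hH' h1W' hW'sym hW'6 hW'pow hW'o htr
  h1S hSo hSinv hSW hSW' hS2 hS3 hQ hQ' in
theorem rest_morph :
    Q.IsRestMorphism Q' (Uq L H W S) (Uq L H' W' S) (fS L H W H' W' S hSW' h1W') := by
  have hfpi := fpi L hstd Un hUn H V W hH h1W hWsym hW6 hWpow H' W' h1W' U htr S
    hSinv hSW hSW' hS2
  have hmk := fun a b => mk_eq L hstd Un hUn H V W hH h1W hWsym hW6 hWpow (a := a) (b := b)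
  have hmk' := fun a b => mk_eq L hstd Un hUn H' V' W' hH' h1W' hW'sym hW'6 hW'pow
    (a := a) (b := b)
  have hSU : ∀ x ∈ S, x ∈ Un 6 := fun x hx => hW6 (hSW hx)
  have hmaps : Set.MapsTo (fS L H W H' W' S hSW' h1W') (Uq L H W S) (Uq L H' W' S) := by
    rintro x ⟨s, hs, rfl⟩
    rw [hfpi s hs]
    exact ⟨⟨(s : G), hSW' hs⟩, hs, rfl⟩
  refine ⟨fS_contOn L hstd Un hUn H V W hH h1W hWsym hW6 hWpow hWo H' W' h1W' hW'o U htr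
    S hSo hSinv hSW hSW' hS2, hmaps, ?_, ?_, ?_⟩
  · -- maps one to one
    have h1 : Q.one = Quot.mk (L.quotRel H W) ⟨L.one, h1W⟩ := hQ.1
    rw [h1, hfpi ⟨L.one, h1W⟩ h1S, hQ'.1]
  · -- Lambda condition
    rintro x ⟨⟨_, ⟨s, hs, rfl⟩⟩, _⟩
    have hisW : L.inv (s : G) ∈ W := W_inv L hstd W hWsym s.2
    have hinv : Q.inv (Quot.mk (L.quotRel H W) s)
        = Quot.mk (L.quotRel H W) ⟨L.inv (s : G), hisW⟩ := hQ.2.2.1 s hisW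
    have hisW' : L.inv (s : G) ∈ W' := hSW' (hSinv _ hs)
    have hinv' : Q'.inv (Quot.mk (L.quotRel H' W') ⟨(s : G), hSW' hs⟩)
        = Quot.mk (L.quotRel H' W') ⟨L.inv (s : G), hisW'⟩ := hQ'.2.2.1 ⟨(s : G), hSW' hs⟩ hisW'
    constructor
    · refine ⟨⟨?_, hmaps ⟨s, hs, rfl⟩⟩, ?_⟩
      · rw [hQ'.2.1]; trivial
      · rw [Set.mem_preimage, hfpi s hs, hinv']
        exact ⟨⟨L.inv (s : G), hisW'⟩, hSinv _ hs, rfl⟩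
    · rw [hfpi s hs, hinv, hinv', hfpi ⟨L.inv (s : G), hisW⟩ (hSinv _ hs)]
  · -- Omega condition
    intro x y hxy
    obtain ⟨hO, hxU, hyU, hmU⟩ := hxy
    obtain ⟨s₁, hs1, rfl⟩ := hxU
    obtain ⟨s₂, hs2, rfl⟩ := hyU
    have hOm : ((s₁ : G), (s₂ : G)) ∈ L.Omega := omega2 L hstd Un hUn (hSU _ hs1) (hSU _ hs2)
    have hmW : L.mul (s₁ : G) (s₂ : G) ∈ W := (hS2 _ hs1 _ hs2).2.1
    have hmW' : L.mul (s₁ : G) (s₂ : G) ∈ W' := (hS2 _ hs1 _ hs2).2.2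
    have hmul : Q.mul (Quot.mk (L.quotRel H W) s₁) (Quot.mk (L.quotRel H W) s₂)
        = Quot.mk (L.quotRel H W) ⟨L.mul (s₁ : G) (s₂ : G), hmW⟩ :=
      hQ.2.2.2.2 s₁ s₂ hOm hmW
    have hmul' : Q'.mul (Quot.mk (L.quotRel H' W') ⟨(s₁ : G), hSW' hs1⟩)
          (Quot.mk (L.quotRel H' W') ⟨(s₂ : G), hSW' hs2⟩)
        = Quot.mk (L.quotRel H' W') ⟨L.mul (s₁ : G) (s₂ : G), hmW'⟩ :=
      hQ'.2.2.2.2 ⟨(s₁ : G), hSW' hs1⟩ ⟨(s₂ : G), hSW' hs2⟩ hOm hmW'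
    rw [hmul] at hmU
    obtain ⟨s₃, hs3, he3⟩ := hmU
    have hrelH : L.mul (L.inv (s₃ : G)) (L.mul (s₁ : G) (s₂ : G)) ∈ H :=
      (hmk s₃ ⟨L.mul (s₁ : G) (s₂ : G), hmW⟩).mp he3
    have his3 : L.inv (s₃ : G) ∈ Un 6 := chain_inv L hstd Un hUn (by omega) (hSU _ hs3)
    have happ := wp_append L hstd Un hUn (l₁ := [L.inv (s₃ : G)]) (l₂ := [(s₁ : G), (s₂ : G)])
      (by simpa using his3)
      (by intro a ha; simp at ha; rcases ha with h|h <;> rw [h] <;>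
            [exact hSU _ hs1; exact hSU _ hs2])
      (by simp) (by simp) (by simp)
    rw [wp_single, wp_pair L hstd Un hUn (hSU _ hs1) (hSU _ hs2)] at happ
    have hUmem : L.mul (L.inv (s₃ : G)) (L.mul (s₁ : G) (s₂ : G)) ∈ U := by
      rw [happ.2]
      exact hS3 _ (hSinv _ hs3) _ hs1 _ hs2
    have hrelH' : L.mul (L.inv (s₃ : G)) (L.mul (s₁ : G) (s₂ : G)) ∈ H' :=
      htr _ hUmem hrelH
    have he3' : Quot.mk (L.quotRel H' W') ⟨(s₃ : G), hSW' hs3⟩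
        = Quot.mk (L.quotRel H' W') ⟨L.mul (s₁ : G) (s₂ : G), hmW'⟩ :=
      (hmk' ⟨(s₃ : G), hSW' hs3⟩ ⟨L.mul (s₁ : G) (s₂ : G), hmW'⟩).mpr hrelH'
    constructor
    · refine ⟨?_, hmaps ⟨s₁, hs1, rfl⟩, hmaps ⟨s₂, hs2, rfl⟩, ?_⟩
      · rw [hQ'.2.2.2.1, hfpi s₁ hs1, hfpi s₂ hs2]
        exact ⟨⟨(s₁ : G), hSW' hs1⟩, ⟨(s₂ : G), hSW' hs2⟩, hOm, hmW', rfl⟩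
      · rw [hfpi s₁ hs1, hfpi s₂ hs2, hmul', ← he3']
        exact ⟨⟨(s₃ : G), hSW' hs3⟩, hs3, rfl⟩
    · rw [hmul, ← he3, hfpi s₁ hs1, hfpi s₂ hs2, hmul', ← he3', hfpi s₃ hs3]

end Main
end S15
/-- local quotients by equivalent normal sublocal groups are locally
isomorphic. -/
theorem statement_15 {G : Type*} [TopologicalSpace G] [T2Space G]
    (L : LocalGroup G) (hstd : L.Std) (Un : ℕ → Set G) (hUn : L.IsProdChain Un)
    (H V H' V' : Set G) (hHV : L.IsNormalSublocalGroup H V)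
    (hH'V' : L.IsNormalSublocalGroup H' V')
    (U : Set G) (hUo : IsOpen U) (h1U : L.one ∈ U) (hequiv : H ∩ U = H' ∩ U)
    (W W' : Set G) (hWo : IsOpen W) (h1W : L.one ∈ W) (hWsym : L.IsSymmetric W)
    (hW6 : W ⊆ Un 6) (hWpow : L.setPow W 6 ⊆ V)
    (hW'o : IsOpen W') (h1W' : L.one ∈ W') (hW'sym : L.IsSymmetric W')
    (hW'6 : W' ⊆ Un 6) (hW'pow : L.setPow W' 6 ⊆ V')
    (Q : LocalGroup (L.QuotCarrier H W)) (hQ : L.IsQuotStructure H W h1W Q)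
    (Q' : LocalGroup (L.QuotCarrier H' W')) (hQ' : L.IsQuotStructure H' W' h1W' Q') :
    Q.LocallyIsomorphic Q' := by
  obtain ⟨hH, -, -⟩ := hHV
  obtain ⟨hH', -, -⟩ := hH'V'
  have htr : ∀ z ∈ U, z ∈ H → z ∈ H' := by
    intro z hzU hzH
    have : z ∈ H' ∩ U := hequiv ▸ ⟨hzH, hzU⟩
    exact this.1
  have htr' : ∀ z ∈ U, z ∈ H' → z ∈ H := by
    intro z hzU hzH
    have : z ∈ H ∩ U := hequiv.symm ▸ ⟨hzH, hzU⟩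
    exact this.1
  -- a "shrinking" step using continuity of multiplication at (1,1)
  have step : ∀ T : Set G, IsOpen T → L.one ∈ T →
      ∃ P : Set G, IsOpen P ∧ L.one ∈ P ∧ P ⊆ T ∧ ∀ x ∈ P, ∀ y ∈ P, L.mul x y ∈ T := by
    intro T hTo h1T
    have hc : ContinuousAt (fun q : G × G => L.mul q.1 q.2) (L.one, L.one) :=
      L.continuousOn_mul.continuousAt
        (L.isOpen_Omega.mem_nhds (L.pair_one_left L.one))
    have hpre : (fun q : G × G => L.mul q.1 q.2) ⁻¹' T ∈ 𝓝 (L.one, L.one) := by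
      apply hc
      rw [show (fun q : G × G => L.mul q.1 q.2) (L.one, L.one) = L.one from L.one_mul L.one]
      exact hTo.mem_nhds h1T
    rw [mem_nhds_prod_iff'] at hpre
    obtain ⟨u, v, huo, h1u, hvo, h1v, huv⟩ := hpre
    refine ⟨u ∩ v ∩ T, (huo.inter hvo).inter hTo, ⟨⟨h1u, h1v⟩, h1T⟩, Set.inter_subset_right,
      ?_⟩
    intro x hx y hy
    exact huv (Set.mk_mem_prod hx.1.1 hy.1.2)
  have hU6o : IsOpen (Un 6) := (hUn 6 (by omega)).1
  have h1U6 : L.one ∈ Un 6 := (hUn 6 (by omega)).2.1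
  obtain ⟨P₁, hP1o, h1P1, hP1T, hP1m⟩ := step (U ∩ (W ∩ (W' ∩ Un 6)))
    (hUo.inter (hWo.inter (hW'o.inter hU6o))) ⟨h1U, h1W, h1W', h1U6⟩
  obtain ⟨P₂, hP2o, h1P2, hP2P, hP2m⟩ := step P₁ hP1o h1P1
  have hinvc : Continuous L.inv := by
    have := L.continuousOn_inv
    rw [hstd.1] at this
    exact continuousOn_univ.mp this
  set S : Set G := P₂ ∩ L.inv ⁻¹' P₂ with hSdef
  have hSo : IsOpen S := hP2o.inter (hinvc.isOpen_preimage P₂ hP2o)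
  have h1S : L.one ∈ S := ⟨h1P2, by rw [Set.mem_preimage, S15.inv_one L hstd]; exact h1P2⟩
  have hSinv : ∀ x ∈ S, L.inv x ∈ S := by
    intro x hx
    exact ⟨hx.2, by rw [Set.mem_preimage, S15.inv_invol L hstd]; exact hx.1⟩
  have hSP1 : S ⊆ P₁ := fun x hx => hP2P hx.1
  have hST : S ⊆ U ∩ (W ∩ (W' ∩ Un 6)) := fun x hx => hP1T (hSP1 hx)
  have hSW : S ⊆ W := fun x hx => (hST hx).2.1
  have hSW' : S ⊆ W' := fun x hx => (hST hx).2.2.1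
  have hSU6 : S ⊆ Un 6 := fun x hx => (hST hx).2.2.2
  have hS2 : ∀ x ∈ S, ∀ y ∈ S, L.mul x y ∈ U ∧ L.mul x y ∈ W ∧ L.mul x y ∈ W' := by
    intro x hx y hy
    have := hP1m x (hSP1 hx) y (hSP1 hy)
    exact ⟨this.1, this.2.1, this.2.2.1⟩
  have hS2' : ∀ x ∈ S, ∀ y ∈ S, L.mul x y ∈ U ∧ L.mul x y ∈ W' ∧ L.mul x y ∈ W := by
    intro x hx y hy
    have := hS2 x hx y hy
    exact ⟨this.1, this.2.2, this.2.1⟩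
  have hS3 : ∀ x ∈ S, ∀ y ∈ S, ∀ z ∈ S, S15.wp L [x, y, z] ∈ U := by
    intro x hx y hy z hz
    have hyz : L.mul y z ∈ P₁ := hP2m y hy.1 z hz.1
    have hxyz : L.mul x (L.mul y z) ∈ U := (hP1m x (hSP1 hx) _ hyz).1
    have hcons := S15.wp_cons L hstd Un hUn (x := x) (l := [y, z]) (hSU6 hx)
      (by intro a ha; simp at ha; rcases ha with h|h <;> rw [h] <;>
            [exact hSU6 hy; exact hSU6 hz])
      (by simp) (by simp)
    rw [hcons.1, S15.wp_pair L hstd Un hUn (hSU6 hy) (hSU6 hz)]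
    exact hxyz
  -- the two maps
  set f := S15.fS L H W H' W' S hSW' h1W' with hfdef
  set g := S15.fS L H' W' H W S hSW h1W with hgdef
  have hfpi := S15.fpi L hstd Un hUn H V W hH h1W hWsym hW6 hWpow H' W' h1W' U htr S
    hSinv hSW hSW' hS2
  have hgpi := S15.fpi L hstd Un hUn H' V' W' hH' h1W' hW'sym hW'6 hW'pow H W h1W U htr' S
    hSinv hSW' hSW hS2'
  rw [← hfdef] at hfpi
  rw [← hgdef] at hgpi
  refine ⟨S15.Uq L H W S, S15.Uq L H' W' S, f, g, ?_, ?_, ?_, ?_, ?_, ?_, ?_, ?_, ?_⟩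
  · exact S15.Uq_open L hstd Un hUn H V W hH h1W hWsym hW6 hWpow hWo H' W' h1W' hW'o U htr
      S hSo hSinv hSW hSW' hS2
  · rw [hQ.1]; exact ⟨⟨L.one, h1W⟩, h1S, rfl⟩
  · exact S15.Uq_open L hstd Un hUn H' V' W' hH' h1W' hW'sym hW'6 hW'pow hW'o H W h1W hWo U
      htr' S hSo hSinv hSW' hSW hS2'
  · rw [hQ'.1]; exact ⟨⟨L.one, h1W'⟩, h1S, rfl⟩
  · -- BijOn
    have hmaps : Set.MapsTo f (S15.Uq L H W S) (S15.Uq L H' W' S) := by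
      rintro x ⟨s, hs, rfl⟩
      rw [hfpi s hs]
      exact ⟨⟨(s : G), hSW' hs⟩, hs, rfl⟩
    have hginv : ∀ x ∈ S15.Uq L H W S, g (f x) = x := by
      rintro x ⟨s, hs, rfl⟩
      rw [hfpi s hs, hgpi ⟨(s : G), hSW' hs⟩ hs]
    refine ⟨hmaps, ?_, ?_⟩
    · intro a ha b hb he
      rw [← hginv a ha, ← hginv b hb, he]
    · rintro y ⟨t, ht, rfl⟩
      exact ⟨Quot.mk (L.quotRel H W) ⟨(t : G), hSW ht⟩, ⟨⟨(t : G), hSW ht⟩, ht, rfl⟩,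
        hfpi ⟨(t : G), hSW ht⟩ ht⟩
  · rintro x ⟨s, hs, rfl⟩
    rw [hfpi s hs, hgpi ⟨(s : G), hSW' hs⟩ hs]
  · rintro y ⟨t, ht, rfl⟩
    rw [hgpi t ht, hfpi ⟨(t : G), hSW ht⟩ ht]
  · exact S15.rest_morph L hstd Un hUn H V W hH h1W hWsym hW6 hWpow hWo H' V' W' hH' h1W'
      hW'sym hW'6 hW'pow hW'o U htr S hSo h1S hSinv hSW hSW' hS2 hS3 Q hQ Q' hQ'
  · exact S15.rest_morph L hstd Un hUn H' V' W' hH' h1W' hW'sym hW'6 hW'pow hW'o H V W hH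
      h1W hWsym hW6 hWpow hWo U htr' S hSo h1S hSinv hSW' hSW hS2' hS3 Q' hQ' Q hQ
end
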